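/- For every 𝕋 ∈ 𝒯⁽ⁿ⁾ there exists exactly one probability measure Q on σ(ζ_1,…,ζ_n) that is absolutely continuous with respect to P, makes (S⁽ⁿ⁾_{τ_k})_{k=0,…,n} a martingale with respect to (𝓕⁽ⁿ⁾_{τ_k})_{k=0,…,n}, and gives full measure to the set of scenarios in which, for every k with τ_k < 1, the increments ζ_i for nτ_k < i ≤ nτ_{k+1} are either all +1 or all −1 (including when τ_{k+1} = 1). -/

import Mathlib

open MeasureTheory Set

/-- The sample space `Ω = {−1,+1}^ℕ`, coded as sequences of Booleans. -/
abbrev BinOmega := ℕ → Bool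

/-- The coordinate maps `ζ_i`, valued in `{−1, +1}`. -/
noncomputable def zeta (i : ℕ) (ω : BinOmega) : ℝ := if ω i then 1 else -1

/-- The σ-algebra `σ(ζ_1, …, ζ_k)` generated by the first `k` coin tosses. -/
def coordMS (k : ℕ) : MeasurableSpace BinOmega :=
  ⨆ i ∈ Finset.Icc 1 k, MeasurableSpace.comap (fun ω => ω i) inferInstance

lemma coordMS_mono : Monotone coordMS := fun k l hkl =>
  biSup_mono fun i hi => by
    simp only [Finset.mem_Icc] at hi ⊢
    exact ⟨hi.1, hi.2.trans hkl⟩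

lemma coordMS_le (k : ℕ) : coordMS k ≤ (inferInstance : MeasurableSpace BinOmega) :=
  iSup₂_le fun i _ => (measurable_pi_apply i).comap_le

/-- The discrete filtration `(σ(ζ_1, …, ζ_k))_{k ∈ ℕ}`. -/
def coordFilt : Filtration ℕ (inferInstance : MeasurableSpace BinOmega) where
  seq := coordMS
  mono' := coordMS_mono
  le' := coordMS_le

/-- The `n`-period binomial price after `k` steps:
`s₀ · exp((σ/√n) Σ_{i=1}^k ζ_i)`. -/
noncomputable def binSd (n : ℕ) (σ s₀ : ℝ) (k : ℕ) (ω : BinOmega) : ℝ :=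
  s₀ * Real.exp ((σ / Real.sqrt n) * ∑ i ∈ Finset.Icc 1 k, zeta i ω)

/-- The `n`-period binomial price process `S⁽ⁿ⁾_t`, `t ∈ [0,1]`. -/
noncomputable def binS (n : ℕ) (σ s₀ : ℝ) (t : ℝ) (ω : BinOmega) : ℝ :=
  binSd n σ s₀ ⌊(n : ℝ) * t⌋₊ ω

/-- The filtration `(𝓕⁽ⁿ⁾_t)_{t}` generated by the binomial price process:
`𝓕⁽ⁿ⁾_t = σ(ζ_1, …, ζ_{⌊nt⌋})`. -/
noncomputable def binFilt (n : ℕ) : Filtration ℝ (inferInstance : MeasurableSpace BinOmega) where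
  seq t := coordMS ⌊(n : ℝ) * t⌋₊
  mono' := fun s t hst => coordMS_mono (Nat.floor_le_floor
    (mul_le_mul_of_nonneg_left hst (by positivity)))
  le' := fun t => coordMS_le _

/-- `P` is the fair-coin measure: the coordinates `(ζ_i)_{i ≥ 1}` are i.i.d. with
`P[ζ_i = 1] = 1/2`. -/
def IsFairCoin (P : Measure BinOmega) : Prop :=
  IsProbabilityMeasure P ∧
    ∀ (s : Finset ℕ) (b : ℕ → Bool), (∀ i ∈ s, 1 ≤ i) →
      P {ω | ∀ i ∈ s, ω i = b i} = (1 / 2 : ENNReal) ^ s.card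

/-- The coin tosses `ζ_i`, `a < i ≤ b`, are all `+1` or all `−1`. -/
def MonotoneRun (a b : ℕ) (ω : BinOmega) : Prop :=
  (∀ i, a < i → i ≤ b → ω i = true) ∨ (∀ i, a < i → i ≤ b → ω i = false)

/-- A stopping system `𝕋 ∈ 𝒯⁽ⁿ⁾`: stopping times `0 = τ_0 ≤ τ_1 ≤ ⋯ ≤ τ_n = 1` with values
in `{0, 1/n, …, 1}` (coded in units of time steps, i.e. valued in `{0, 1, …, n}`) such that on
`{τ_{k+1} < 1}` the increments between `τ_k` and `τ_{k+1}` are all `+1` or all `−1`. -/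
structure BinStopSystem (n : ℕ) where
  τ : ℕ → BinOmega → ℕ
  zero : ∀ ω, τ 0 ω = 0
  mono : ∀ k ω, τ k ω ≤ τ (k + 1) ω
  le_n : ∀ k ω, τ k ω ≤ n
  top : ∀ ω, τ n ω = n
  stopping : ∀ k, IsStoppingTime coordFilt (fun ω => ((τ k ω : ℕ) : WithTop ℕ))
  run : ∀ k ω, τ (k + 1) ω < n → MonotoneRun (τ k ω) (τ (k + 1) ω) ω

/-- `N(𝕋)`, the number of interventions: `sup {k : τ_k < 1}`. -/
noncomputable def numStops (n : ℕ) (T : BinStopSystem n) (ω : BinOmega) : ℕ :=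
  sSup {k : ℕ | T.τ k ω < n}

/-- `Q` is the measure `Q(𝕋)` associated with the stopping system `𝕋`: a probability measure,
absolutely continuous with respect to `P`, under which `(S⁽ⁿ⁾_{τ_k})_k` is a martingale with
respect to `(𝓕⁽ⁿ⁾_{τ_k})_k`, and which only charges scenarios in which, for every `k` with
`τ_k < 1`, the price moves strictly monotonically between `τ_k` and `τ_{k+1}` (also when
`τ_{k+1} = 1`). -/
def IsQMeasure (n : ℕ) (σ s₀ : ℝ) (P Q : Measure BinOmega) (T : BinStopSystem n) : Prop :=
  IsProbabilityMeasure Q ∧ Q ≪ P ∧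
    (∀ᵐ ω ∂Q, ∀ k, T.τ k ω < n → MonotoneRun (T.τ k ω) (T.τ (k + 1) ω) ω) ∧
    ∀ k, Q[(fun ω => binSd n σ s₀ (T.τ (k + 1) ω) ω) | (T.stopping k).measurableSpace]
          =ᵐ[Q] fun ω => binSd n σ s₀ (T.τ k ω) ω

namespace QP

/-- The finite path space: the first `n` coin tosses. -/
abbrev E (n : ℕ) := Fin n → Bool

/-- Restriction of a scenario to its first `n` tosses (coordinates `1, …, n`). -/
def restr (n : ℕ) (ω : BinOmega) : E n := fun i => ω (i + 1)

/-- Canonical lift of a finite path to a scenario. -/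
def lift (n : ℕ) (p : E n) : BinOmega := fun j =>
  if h : 1 ≤ j ∧ j ≤ n then p ⟨j - 1, by omega⟩ else false

lemma restr_lift (n : ℕ) (p : E n) : restr n (lift n p) = p := by
  funext i
  have hi : (1 ≤ (i : ℕ) + 1 ∧ (i : ℕ) + 1 ≤ n) := ⟨by omega, by omega⟩
  simp only [restr, lift, dif_pos hi]
  congr 1

lemma measurable_restr (n : ℕ) : Measurable (restr n) :=
  measurable_pi_lambda _ fun i => measurable_pi_apply _

lemma lift_eq_of_agree {n : ℕ} {i : ℕ} (h1 : 1 ≤ i) (h2 : i ≤ n) (p : E n) :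
    lift n p i = p ⟨i - 1, by omega⟩ := dif_pos ⟨h1, h2⟩

lemma coordMS_eq (m : ℕ) :
    coordMS m = MeasurableSpace.comap (restr m) inferInstance := by
  apply le_antisymm
  · refine iSup₂_le fun i hi => ?_
    simp only [Finset.mem_Icc] at hi
    have : (fun ω : BinOmega => ω i)
        = (fun p : E m => p ⟨i - 1, by omega⟩) ∘ restr m := by
      funext ω
      simp only [Function.comp_apply, restr]
      congr 1
      omega
    rw [this, ← MeasurableSpace.comap_comp]
    exact MeasurableSpace.comap_mono (measurable_pi_apply _).comap_le
  · rw [show (inferInstance : MeasurableSpace (E m)) = MeasurableSpace.pi from rfl,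
      MeasurableSpace.pi, MeasurableSpace.comap_iSup]
    refine iSup_le fun i => ?_
    rw [MeasurableSpace.comap_comp]
    have : ((fun b : E m => b i) ∘ restr m) = fun ω : BinOmega => ω (i + 1) := rfl
    rw [show MeasurableSpace.comap ((fun b : E m => b i) ∘ restr m)
        (inferInstance : MeasurableSpace Bool)
        = MeasurableSpace.comap (fun ω : BinOmega => ω ((i : ℕ) + 1)) inferInstance from rfl]
    refine le_trans ?_ (le_iSup₂ (f := fun (i : ℕ) _ =>
      MeasurableSpace.comap (fun ω : BinOmega => ω i) inferInstance)
      ((i : ℕ) + 1) ?_)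
    · exact le_rfl
    · simp only [Finset.mem_Icc]
      omega

lemma coordMS_iff {m : ℕ} {A : Set BinOmega} :
    MeasurableSet[coordMS m] A ↔ ∃ S : Set (E m), A = restr m ⁻¹' S := by
  rw [coordMS_eq]
  rw [MeasurableSpace.measurableSet_comap]
  constructor
  · rintro ⟨S, -, rfl⟩
    exact ⟨S, rfl⟩
  · rintro ⟨S, rfl⟩
    exact ⟨S, S.toFinite.measurableSet, rfl⟩

/-- Two scenarios agree on coordinates `1, …, a`. -/
def AgreeC (a : ℕ) (ω ω' : BinOmega) : Prop := ∀ i, 1 ≤ i → i ≤ a → ω i = ω' i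

lemma mem_iff_of_agree {m : ℕ} {A : Set BinOmega} (hA : MeasurableSet[coordMS m] A)
    {ω ω' : BinOmega} (h : AgreeC m ω ω') : ω ∈ A ↔ ω' ∈ A := by
  obtain ⟨S, rfl⟩ := coordMS_iff.1 hA
  have : restr m ω = restr m ω' := funext fun i => h _ (by omega) (by omega)
  simp [Set.mem_preimage, this]

lemma stop_eq {τ : BinOmega → ℕ} (hτ : IsStoppingTime coordFilt (fun ω => ((τ ω : ℕ) : WithTop ℕ))) {m : ℕ} {ω ω' : BinOmega}
    (h : AgreeC m ω ω') (hm : τ ω ≤ m) : τ ω' = τ ω := by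
  have key : ∀ j, j ≤ m → ∀ x y : BinOmega, AgreeC m x y → τ x ≤ j → τ y ≤ j := by
    intro j hj x y hxy hx
    have hA : MeasurableSet[coordMS j] {z | τ z ≤ j} := by
      have h := hτ j
      simp only [Nat.cast_withTop, WithTop.coe_le_coe] at h
      exact h
    have hxy' : AgreeC j x y := fun i h1 h2 => hxy i h1 (h2.trans hj)
    exact (mem_iff_of_agree hA hxy').1 hx
  have h1 : τ ω' ≤ τ ω := key _ hm _ _ h le_rfl
  have h2 : τ ω ≤ τ ω' := key _ (h1.trans hm) _ _ (fun i a b => (h i a b).symm) le_rfl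
  omega

end QP

namespace QP

section Core

variable (n : ℕ) (T : BinStopSystem n)

/-- The stopping times viewed on the finite path space. -/
def tauh (k : ℕ) (p : E n) : ℕ := T.τ k (lift n p)

/-- Two paths agree on coordinates `1, …, a` (indices `< a`). -/
def agr (n : ℕ) (a : ℕ) (p p' : E n) : Prop := ∀ i : Fin n, (i : ℕ) < a → p i = p' i

instance {a : ℕ} {p p' : E n} : Decidable (agr n a p p') := by
  unfold agr; infer_instance

/-- A path is constantly `v` on coordinates `a+1, …, b` (indices in `[a, b)`). -/
def runIs (n : ℕ) (a b : ℕ) (v : Bool) (p : E n) : Prop :=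
  ∀ i : Fin n, a ≤ (i : ℕ) → (i : ℕ) < b → p i = v

instance {a b : ℕ} {v : Bool} {p : E n} : Decidable (runIs n a b v p) := by
  unfold runIs; infer_instance

/-- Pad a path with the constant value `v` above coordinate `a`. -/
def padAbove (n : ℕ) (a : ℕ) (v : Bool) (p : E n) : E n :=
  fun i => if (i : ℕ) < a then p i else v

lemma agr_refl {a : ℕ} (p : E n) : agr n a p p := fun _ _ => rfl

lemma agr_symm {a : ℕ} {p p' : E n} (h : agr n a p p') : agr n a p' p :=
  fun i hi => (h i hi).symm

lemma agr_trans {a : ℕ} {p p' p'' : E n} (h : agr n a p p') (h' : agr n a p' p'') :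
    agr n a p p'' := fun i hi => (h i hi).trans (h' i hi)

lemma agr_mono {a a' : ℕ} (haa : a' ≤ a) {p p' : E n} (h : agr n a p p') : agr n a' p p' :=
  fun i hi => h i (lt_of_lt_of_le hi haa)

lemma lift_agree {a : ℕ} {p p' : E n} (h : agr n a p p') :
    AgreeC a (lift n p) (lift n p') := by
  intro i h1 h2
  by_cases hn : i ≤ n
  · rw [lift_eq_of_agree h1 hn, lift_eq_of_agree h1 hn]
    exact h ⟨i - 1, by omega⟩ (by simp only; omega)
  · unfold lift
    rw [dif_neg (by omega), dif_neg (by omega)]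

lemma lift_restr {i : ℕ} (h1 : 1 ≤ i) (h2 : i ≤ n) (ω : BinOmega) :
    lift n (restr n ω) i = ω i := by
  rw [lift_eq_of_agree h1 h2]
  show ω (i - 1 + 1) = ω i
  congr 1
  omega

lemma tau_mono_le {j k : ℕ} (h : j ≤ k) (ω : BinOmega) : T.τ j ω ≤ T.τ k ω := by
  induction k with
  | zero => rw [Nat.le_zero.1 h]
  | succ k ih =>
      rcases Nat.lt_or_ge j (k+1) with hj | hj
      · exact le_trans (ih (by omega)) (T.mono k ω)
      · have : j = k + 1 := by omega
        subst this; exact le_rfl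

lemma tau_top_of_ge {k : ℕ} (h : n ≤ k) (ω : BinOmega) : T.τ k ω = n :=
  le_antisymm (T.le_n _ _) (by
    calc n = T.τ n ω := (T.top ω).symm
    _ ≤ T.τ k ω := tau_mono_le n T h ω)

lemma tauh_le (k : ℕ) (p : E n) : tauh n T k p ≤ n := T.le_n _ _

lemma tauh_mono {j k : ℕ} (h : j ≤ k) (p : E n) : tauh n T j p ≤ tauh n T k p :=
  tau_mono_le n T h _

lemma tauh_zero (p : E n) : tauh n T 0 p = 0 := T.zero _

lemma tauh_top {k : ℕ} (h : n ≤ k) (p : E n) : tauh n T k p = n := tau_top_of_ge n T h _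

lemma tau_eq_tauh (k : ℕ) (ω : BinOmega) : T.τ k ω = tauh n T k (restr n ω) := by
  have hA : AgreeC n ω (lift n (restr n ω)) := fun i h1 h2 => (lift_restr n h1 h2 ω).symm
  exact (stop_eq (T.stopping k) hA (T.le_n k ω)).symm

lemma tauh_agree {a k : ℕ} {p p' : E n} (h : agr n a p p') (hk : tauh n T k p ≤ a) :
    tauh n T k p' = tauh n T k p :=
  stop_eq (T.stopping k) (lift_agree n h) hk

/-- The next stopping time along the `v`-branch from the node at time `τ_k`. -/
def bib (v : Bool) (k : ℕ) (p : E n) : ℕ :=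
  tauh n T (k+1) (padAbove n (tauh n T k p) v p)

noncomputable def cc (n : ℕ) (σ : ℝ) : ℝ := σ / Real.sqrt n

/-- One-step up-move probability of the martingale measure at a node. -/
noncomputable def qq (σ : ℝ) (k : ℕ) (p : E n) : ℝ :=
  (1 - Real.exp (-(cc n σ * ((bib n T false k p - tauh n T k p : ℕ) : ℝ)))) /
    (Real.exp (cc n σ * ((bib n T true k p - tauh n T k p : ℕ) : ℝ)) -
      Real.exp (-(cc n σ * ((bib n T false k p - tauh n T k p : ℕ) : ℝ))))

/-- The one-step weight of a path at level `k`. -/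
noncomputable def rho (σ : ℝ) (k : ℕ) (p : E n) : ℝ :=
  if tauh n T (k+1) p = tauh n T k p then 1
  else if runIs n (tauh n T k p) (tauh n T (k+1) p) true p then qq n T σ k p
  else if runIs n (tauh n T k p) (tauh n T (k+1) p) false p then 1 - qq n T σ k p
  else 0

/-- The density of the martingale measure with respect to the fair-coin measure. -/
noncomputable def fhat (σ : ℝ) (p : E n) : ℝ :=
  2 ^ n * ∏ j ∈ Finset.range n, rho n T σ j p

/-- The atom of the stopped σ-algebra `𝓕_{τ_k}` containing `r`, on path space. -/
def atomF (k : ℕ) (r : E n) : Finset (E n) :=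
  Finset.univ.filter (fun p => agr n (tauh n T k r) p r)

lemma mem_atomF {k : ℕ} {r p : E n} :
    p ∈ atomF n T k r ↔ agr n (tauh n T k r) p r := by
  simp [atomF]

lemma self_mem_atomF (k : ℕ) (r : E n) : r ∈ atomF n T k r :=
  (mem_atomF n T).2 (agr_refl n r)

lemma tauh_of_mem_le {j k : ℕ} {r p : E n} (hj : j ≤ k) (hp : p ∈ atomF n T k r) :
    tauh n T j p = tauh n T j r :=
  tauh_agree n T (agr_symm n ((mem_atomF n T).1 hp)) (tauh_mono n T hj r)

lemma tauh_of_mem {k : ℕ} {r p : E n} (hp : p ∈ atomF n T k r) :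
    tauh n T k p = tauh n T k r := tauh_of_mem_le n T le_rfl hp

lemma pad_mem_atomF (k : ℕ) (r : E n) (v : Bool) :
    padAbove n (tauh n T k r) v r ∈ atomF n T k r :=
  (mem_atomF n T).2 (fun i hi => if_pos hi)

lemma pad_of_mem {k : ℕ} {r p : E n} (v : Bool) (hp : p ∈ atomF n T k r) :
    padAbove n (tauh n T k p) v p = padAbove n (tauh n T k r) v r := by
  funext i
  unfold padAbove
  rw [tauh_of_mem n T hp]
  by_cases hi : (i : ℕ) < tauh n T k r
  · rw [if_pos hi, if_pos hi]
    exact (mem_atomF n T).1 hp i hi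
  · rw [if_neg hi, if_neg hi]

lemma bib_of_mem {k : ℕ} {r p : E n} (v : Bool) (hp : p ∈ atomF n T k r) :
    bib n T v k p = bib n T v k r := by
  unfold bib
  rw [pad_of_mem n T v hp]

lemma qq_of_mem {σ : ℝ} {k : ℕ} {r p : E n} (hp : p ∈ atomF n T k r) :
    qq n T σ k p = qq n T σ k r := by
  unfold qq
  rw [bib_of_mem n T true hp, bib_of_mem n T false hp, tauh_of_mem n T hp]

lemma le_bib (k : ℕ) (r : E n) (v : Bool) : tauh n T k r ≤ bib n T v k r := by
  have h1 : tauh n T k (padAbove n (tauh n T k r) v r) = tauh n T k r :=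
    tauh_of_mem n T (pad_mem_atomF n T k r v)
  calc tauh n T k r = tauh n T k (padAbove n (tauh n T k r) v r) := h1.symm
  _ ≤ tauh n T (k+1) (padAbove n (tauh n T k r) v r) := tauh_mono n T (Nat.le_succ k) _
  _ = bib n T v k r := rfl

lemma bib_le (k : ℕ) (r : E n) (v : Bool) : bib n T v k r ≤ n := tauh_le n T _ _

lemma tauh_succ_congr {k : ℕ} {r p p' : E n} (hp : p ∈ atomF n T k r)
    (hp' : p' ∈ atomF n T k r) (h : tauh n T (k+1) p ≤ tauh n T k r) :
    tauh n T (k+1) p' = tauh n T (k+1) p :=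
  tauh_agree n T (agr_trans n ((mem_atomF n T).1 hp) (agr_symm n ((mem_atomF n T).1 hp'))) h

lemma all_eq_of_bib_eq {v : Bool} {k : ℕ} {r : E n} (h : bib n T v k r = tauh n T k r)
    {p : E n} (hp : p ∈ atomF n T k r) : tauh n T (k+1) p = tauh n T k r := by
  have := tauh_succ_congr n T (pad_mem_atomF n T k r v) hp (le_of_eq h)
  rw [this]
  exact h

lemma lt_tauh_succ {v : Bool} {k : ℕ} {r : E n} (h : tauh n T k r < bib n T v k r)
    {p : E n} (hp : p ∈ atomF n T k r) : tauh n T k r < tauh n T (k+1) p := by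
  by_contra hc
  push_neg at hc
  have h2 := tauh_succ_congr n T hp (pad_mem_atomF n T k r v) hc
  have hb : tauh n T k r < tauh n T (k+1) (padAbove n (tauh n T k r) v r) := h
  omega

lemma lt_bib_other {v v' : Bool} {k : ℕ} {r : E n} (h : tauh n T k r < bib n T v k r) :
    tauh n T k r < bib n T v' k r :=
  lt_tauh_succ n T h (pad_mem_atomF n T k r v')

lemma branch_eq {v : Bool} {k : ℕ} {r p : E n}
    (hp : p ∈ atomF n T k r)
    (hrun : runIs n (tauh n T k r) (tauh n T (k+1) p) v p) :
    tauh n T (k+1) p = bib n T v k r ∧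
      agr n (bib n T v k r) p (padAbove n (tauh n T k r) v r) := by
  have hagr : agr n (tauh n T (k+1) p) p (padAbove n (tauh n T k r) v r) := by
    intro i hib
    unfold padAbove
    by_cases hia : (i : ℕ) < tauh n T k r
    · rw [if_pos hia]
      exact (mem_atomF n T).1 hp i hia
    · rw [if_neg hia]
      exact hrun i (not_lt.1 hia) hib
  have hb : tauh n T (k+1) (padAbove n (tauh n T k r) v r) = tauh n T (k+1) p :=
    tauh_agree n T hagr le_rfl
  refine ⟨hb.symm, ?_⟩
  rw [show bib n T v k r = tauh n T (k+1) (padAbove n (tauh n T k r) v r) from rfl, hb]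
  exact hagr

lemma mem_branch {v : Bool} {k : ℕ} {r p : E n}
    (hv : tauh n T k r < bib n T v k r)
    (hagr : agr n (bib n T v k r) p (padAbove n (tauh n T k r) v r)) :
    p ∈ atomF n T k r ∧ tauh n T (k+1) p = bib n T v k r ∧
      runIs n (tauh n T k r) (bib n T v k r) v p := by
  have hmem : p ∈ atomF n T k r := by
    refine (mem_atomF n T).2 (fun i hi => ?_)
    have := hagr i (lt_of_lt_of_le hi (le_of_lt hv))
    rw [this]
    unfold padAbove
    rw [if_pos hi]
  refine ⟨hmem, ?_, ?_⟩
  · exact tauh_agree n T (agr_symm n hagr) le_rfl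
  · intro i h1 h2
    have := hagr i h2
    rw [this]
    unfold padAbove
    rw [if_neg (by omega)]

lemma branch_disjoint (hn : 1 ≤ n) {k : ℕ} {r p : E n}
    (hv : tauh n T k r < bib n T true k r)
    (h1 : agr n (bib n T true k r) p (padAbove n (tauh n T k r) true r))
    (h2 : agr n (bib n T false k r) p (padAbove n (tauh n T k r) false r)) : False := by
  have hvf : tauh n T k r < bib n T false k r := lt_bib_other n T hv
  have han : tauh n T k r < n := lt_of_lt_of_le hv (bib_le n T k r true)
  set i : Fin n := ⟨tauh n T k r, han⟩
  have e1 := h1 i hv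
  have e2 := h2 i hvf
  unfold padAbove at e1 e2
  rw [if_neg (by simp [i])] at e1
  rw [if_neg (by simp [i])] at e2
  rw [e1] at e2
  exact Bool.noConfusion e2

lemma rho_eq_one {σ : ℝ} {k : ℕ} {p : E n} (h : tauh n T (k+1) p = tauh n T k p) :
    rho n T σ k p = 1 := by
  unfold rho
  rw [if_pos h]

lemma rho_branch_true {σ : ℝ} {k : ℕ} {r p : E n}
    (hv : tauh n T k r < bib n T true k r)
    (hagr : agr n (bib n T true k r) p (padAbove n (tauh n T k r) true r)) :
    rho n T σ k p = qq n T σ k r := by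
  obtain ⟨hmem, hb, hrun⟩ := mem_branch n T hv hagr
  unfold rho
  rw [tauh_of_mem n T hmem, hb]
  rw [if_neg (by omega), if_pos hrun]
  exact qq_of_mem n T hmem

lemma rho_branch_false (hn : 1 ≤ n) {σ : ℝ} {k : ℕ} {r p : E n}
    (hv : tauh n T k r < bib n T true k r)
    (hagr : agr n (bib n T false k r) p (padAbove n (tauh n T k r) false r)) :
    rho n T σ k p = 1 - qq n T σ k r := by
  have hvf : tauh n T k r < bib n T false k r := lt_bib_other n T hv
  obtain ⟨hmem, hb, hrun⟩ := mem_branch n T hvf hagr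
  have hnr : ¬ runIs n (tauh n T k r) (bib n T false k r) true p := by
    intro hrunT
    have hrunT' : runIs n (tauh n T k r) (tauh n T (k+1) p) true p := by
      rw [hb]; exact hrunT
    exact branch_disjoint n T hn hv (branch_eq n T hmem hrunT').2 hagr
  unfold rho
  rw [tauh_of_mem n T hmem, hb]
  rw [if_neg (by omega), if_neg hnr, if_pos hrun, qq_of_mem n T hmem]

lemma rho_eq_zero (hn : 1 ≤ n) {σ : ℝ} {k : ℕ} {r p : E n}
    (hv : tauh n T k r < bib n T true k r) (hp : p ∈ atomF n T k r)
    (h1 : ¬ agr n (bib n T true k r) p (padAbove n (tauh n T k r) true r))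
    (h2 : ¬ agr n (bib n T false k r) p (padAbove n (tauh n T k r) false r)) :
    rho n T σ k p = 0 := by
  have hbgt := lt_tauh_succ n T hv hp
  have hn1 : ¬ runIs n (tauh n T k r) (tauh n T (k+1) p) true p :=
    fun hrun => h1 (branch_eq n T hp hrun).2
  have hn2 : ¬ runIs n (tauh n T k r) (tauh n T (k+1) p) false p :=
    fun hrun => h2 (branch_eq n T hp hrun).2
  unfold rho
  rw [tauh_of_mem n T hp]
  rw [if_neg (by omega), if_neg hn1, if_neg hn2]

lemma cc_pos (hn : 1 ≤ n) {σ : ℝ} (hσ : 0 < σ) : 0 < cc n σ :=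
  div_pos hσ (Real.sqrt_pos.2 (by exact_mod_cast hn))

lemma qq_spec (hn : 1 ≤ n) {σ : ℝ} (hσ : 0 < σ) {k : ℕ} {r : E n}
    (hv : tauh n T k r < bib n T true k r) :
    0 ≤ qq n T σ k r ∧ qq n T σ k r ≤ 1 ∧
      qq n T σ k r * Real.exp (cc n σ * ((bib n T true k r - tauh n T k r : ℕ) : ℝ)) +
        (1 - qq n T σ k r) *
          Real.exp (-(cc n σ * ((bib n T false k r - tauh n T k r : ℕ) : ℝ))) = 1 := by
  have hvf : tauh n T k r < bib n T false k r := lt_bib_other n T hv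
  have hc : 0 < cc n σ := cc_pos n hn hσ
  set U : ℝ := ((bib n T true k r - tauh n T k r : ℕ) : ℝ) with hUdef
  set D : ℝ := ((bib n T false k r - tauh n T k r : ℕ) : ℝ) with hDdef
  have hU1 : 1 ≤ U := by
    rw [hUdef]
    exact_mod_cast Nat.one_le_iff_ne_zero.2 (by omega)
  have hD1 : 1 ≤ D := by
    rw [hDdef]
    exact_mod_cast Nat.one_le_iff_ne_zero.2 (by omega)
  have heU : 1 < Real.exp (cc n σ * U) := by
    rw [← Real.exp_zero]
    exact Real.exp_lt_exp.2 (by nlinarith)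
  have heD : Real.exp (-(cc n σ * D)) < 1 := by
    rw [← Real.exp_zero]
    exact Real.exp_lt_exp.2 (by nlinarith)
  have heD0 : 0 < Real.exp (-(cc n σ * D)) := Real.exp_pos _
  have hden : 0 < Real.exp (cc n σ * U) - Real.exp (-(cc n σ * D)) := by linarith
  have hqdef : qq n T σ k r = (1 - Real.exp (-(cc n σ * D))) /
      (Real.exp (cc n σ * U) - Real.exp (-(cc n σ * D))) := rfl
  have hkey : qq n T σ k r * (Real.exp (cc n σ * U) - Real.exp (-(cc n σ * D)))
      = 1 - Real.exp (-(cc n σ * D)) := by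
    rw [hqdef]
    exact div_mul_cancel₀ _ (ne_of_gt hden)
  refine ⟨?_, ?_, ?_⟩
  · rw [hqdef]
    exact div_nonneg (by linarith) (le_of_lt hden)
  · rw [hqdef]
    exact (div_le_one hden).2 (by linarith)
  · linear_combination hkey

/-- The stopped price on path space. -/
noncomputable def Shat (σ s₀ : ℝ) (m : ℕ) (p : E n) : ℝ := binSd n σ s₀ m (lift n p)

lemma binSd_eq_Shat {σ s₀ : ℝ} {m : ℕ} (hm : m ≤ n) (ω : BinOmega) :
    binSd n σ s₀ m ω = Shat n σ s₀ m (restr n ω) := by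
  unfold Shat binSd
  have : ∑ i ∈ Finset.Icc 1 m, zeta i (lift n (restr n ω))
      = ∑ i ∈ Finset.Icc 1 m, zeta i ω := by
    refine Finset.sum_congr rfl (fun i hi => ?_)
    rw [Finset.mem_Icc] at hi
    unfold zeta
    rw [lift_restr n hi.1 (le_trans hi.2 hm)]
  rw [this]

lemma Shat_agree {σ s₀ : ℝ} {a m : ℕ} {p p' : E n} (h : agr n a p p') (hm : m ≤ a) :
    Shat n σ s₀ m p = Shat n σ s₀ m p' := by
  unfold Shat binSd
  have : ∑ i ∈ Finset.Icc 1 m, zeta i (lift n p)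
      = ∑ i ∈ Finset.Icc 1 m, zeta i (lift n p') := by
    refine Finset.sum_congr rfl (fun i hi => ?_)
    rw [Finset.mem_Icc] at hi
    unfold zeta
    rw [lift_agree n h i hi.1 (le_trans hi.2 hm)]
  rw [this]

lemma Shat_pos {σ s₀ : ℝ} (hs₀ : 0 < s₀) (m : ℕ) (p : E n) : 0 < Shat n σ s₀ m p :=
  mul_pos hs₀ (Real.exp_pos _)

lemma Shat_run {σ s₀ : ℝ} {a b : ℕ} {v : Bool} {p : E n} (hrun : runIs n a b v p)
    (hab : a ≤ b) (hbn : b ≤ n) :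
    Shat n σ s₀ b p =
      Shat n σ s₀ a p * Real.exp (cc n σ * ((b - a : ℕ) : ℝ) * (if v then 1 else -1)) := by
  unfold Shat binSd
  have hsplit : ∑ i ∈ Finset.Icc 1 b, zeta i (lift n p)
      = (∑ i ∈ Finset.Icc 1 a, zeta i (lift n p))
        + ((b - a : ℕ) : ℝ) * (if v then 1 else -1) := by
    have h1 : Finset.Icc 1 b = Finset.Ioc 0 b := by rw [← Finset.Icc_add_one_left_eq_Ioc]; rfl
    have h2 : Finset.Icc 1 a = Finset.Ioc 0 a := by rw [← Finset.Icc_add_one_left_eq_Ioc]; rfl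
    rw [h1, h2, ← Finset.sum_Ioc_consecutive _ (Nat.zero_le a) hab]
    congr 1
    have hval : ∀ i ∈ Finset.Ioc a b, zeta i (lift n p) = (if v then (1:ℝ) else -1) := by
      intro i hi
      rw [Finset.mem_Ioc] at hi
      unfold zeta
      rw [lift_eq_of_agree (by omega) (le_trans hi.2 hbn)]
      rw [hrun ⟨i - 1, by omega⟩ (show a ≤ i - 1 by omega) (show i - 1 < b by omega)]
    rw [Finset.sum_congr rfl hval, Finset.sum_const, Nat.card_Ioc, nsmul_eq_mul]
  have hcc : (σ / Real.sqrt n) = cc n σ := rfl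
  rw [hsplit, hcc, mul_add, Real.exp_add, ← mul_assoc (cc n σ), ← mul_assoc]

lemma atomF_top {k : ℕ} {r : E n} (h : tauh n T k r = n) : atomF n T k r = {r} := by
  ext p
  simp only [mem_atomF, Finset.mem_singleton, h]
  constructor
  · intro hagr
    funext i
    exact hagr i i.isLt
  · intro h
    rw [h]
    exact agr_refl n r

lemma treeSum (hn : 1 ≤ n) {σ : ℝ} (hσ : 0 < σ) :
    ∀ m k, n = k + m → ∀ r : E n,
      ∑ p ∈ atomF n T k r, ∏ j ∈ Finset.Ico k n, rho n T σ j p = 1 := by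
  intro m
  induction m with
  | zero =>
      intro k hk r
      rw [atomF_top n T (tauh_top n T (by omega) r), Finset.sum_singleton,
        Finset.Ico_eq_empty (by omega), Finset.prod_empty]
  | succ m ih =>
      intro k hk r
      have hkn : k < n := by omega
      by_cases hbu : bib n T true k r = tauh n T k r
      · have hatom : atomF n T (k+1) r = atomF n T k r := by
          ext p
          rw [mem_atomF, mem_atomF, all_eq_of_bib_eq n T hbu (self_mem_atomF n T k r)]
        calc ∑ p ∈ atomF n T k r, ∏ j ∈ Finset.Ico k n, rho n T σ j p
            = ∑ p ∈ atomF n T k r, ∏ j ∈ Finset.Ico (k+1) n, rho n T σ j p := by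
              refine Finset.sum_congr rfl (fun p hp => ?_)
              rw [Finset.prod_eq_prod_Ico_succ_bot hkn]
              rw [rho_eq_one n T (by rw [all_eq_of_bib_eq n T hbu hp, tauh_of_mem n T hp]),
                one_mul]
          _ = ∑ p ∈ atomF n T (k+1) r, ∏ j ∈ Finset.Ico (k+1) n, rho n T σ j p := by
              rw [hatom]
          _ = 1 := ih (k+1) (by omega) r
      · have hv : tauh n T k r < bib n T true k r :=
          lt_of_le_of_ne (le_bib n T k r true) (Ne.symm hbu)
        have hbT : tauh n T (k+1) (padAbove n (tauh n T k r) true r) = bib n T true k r := rfl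
        have hbF : tauh n T (k+1) (padAbove n (tauh n T k r) false r) = bib n T false k r := rfl
        rw [← Finset.sum_filter_add_sum_filter_not (atomF n T k r)
          (fun p => agr n (bib n T true k r) p (padAbove n (tauh n T k r) true r))]
        rw [← Finset.sum_filter_add_sum_filter_not ((atomF n T k r).filter
          (fun p => ¬ agr n (bib n T true k r) p (padAbove n (tauh n T k r) true r)))
          (fun p => agr n (bib n T false k r) p (padAbove n (tauh n T k r) false r))]
        have hfT : (atomF n T k r).filter
            (fun p => agr n (bib n T true k r) p (padAbove n (tauh n T k r) true r))
            = atomF n T (k+1) (padAbove n (tauh n T k r) true r) := by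
          ext p
          simp only [Finset.mem_filter, mem_atomF, hbT]
          exact ⟨fun h => h.2, fun h => ⟨(mem_atomF n T).1 (mem_branch n T hv h).1, h⟩⟩
        have hfF : ((atomF n T k r).filter
            (fun p => ¬ agr n (bib n T true k r) p (padAbove n (tauh n T k r) true r))).filter
            (fun p => agr n (bib n T false k r) p (padAbove n (tauh n T k r) false r))
            = atomF n T (k+1) (padAbove n (tauh n T k r) false r) := by
          ext p
          simp only [Finset.mem_filter, mem_atomF, hbF]
          constructor
          · exact fun h => h.2
          · intro h
            exact ⟨⟨(mem_atomF n T).1 (mem_branch n T (lt_bib_other n T hv) h).1,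
              fun hT => branch_disjoint n T hn hv hT h⟩, h⟩
        have hsT : ∑ p ∈ (atomF n T k r).filter
            (fun p => agr n (bib n T true k r) p (padAbove n (tauh n T k r) true r)),
            ∏ j ∈ Finset.Ico k n, rho n T σ j p = qq n T σ k r := by
          rw [hfT]
          have : ∀ p ∈ atomF n T (k+1) (padAbove n (tauh n T k r) true r),
              ∏ j ∈ Finset.Ico k n, rho n T σ j p
                = qq n T σ k r * ∏ j ∈ Finset.Ico (k+1) n, rho n T σ j p := by
            intro p hp
            rw [Finset.prod_eq_prod_Ico_succ_bot hkn,
              rho_branch_true n T hv (by rw [mem_atomF, hbT] at hp; exact hp)]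
          rw [Finset.sum_congr rfl this, ← Finset.mul_sum, ih (k+1) (by omega) _, mul_one]
        have hsF : ∑ p ∈ ((atomF n T k r).filter
            (fun p => ¬ agr n (bib n T true k r) p (padAbove n (tauh n T k r) true r))).filter
            (fun p => agr n (bib n T false k r) p (padAbove n (tauh n T k r) false r)),
            ∏ j ∈ Finset.Ico k n, rho n T σ j p = 1 - qq n T σ k r := by
          rw [hfF]
          have : ∀ p ∈ atomF n T (k+1) (padAbove n (tauh n T k r) false r),
              ∏ j ∈ Finset.Ico k n, rho n T σ j p
                = (1 - qq n T σ k r) * ∏ j ∈ Finset.Ico (k+1) n, rho n T σ j p := by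
            intro p hp
            rw [Finset.prod_eq_prod_Ico_succ_bot hkn,
              rho_branch_false n T hn hv (by rw [mem_atomF, hbF] at hp; exact hp)]
          rw [Finset.sum_congr rfl this, ← Finset.mul_sum, ih (k+1) (by omega) _, mul_one]
        have hs0 : ∑ p ∈ ((atomF n T k r).filter
            (fun p => ¬ agr n (bib n T true k r) p (padAbove n (tauh n T k r) true r))).filter
            (fun p => ¬ agr n (bib n T false k r) p (padAbove n (tauh n T k r) false r)),
            ∏ j ∈ Finset.Ico k n, rho n T σ j p = 0 := by
          refine Finset.sum_eq_zero (fun p hp => ?_)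
          rw [Finset.mem_filter, Finset.mem_filter] at hp
          exact Finset.prod_eq_zero (Finset.mem_Ico.2 ⟨le_rfl, hkn⟩)
            (rho_eq_zero n T hn hv hp.1.1 hp.1.2 hp.2)
        rw [hsT, hsF, hs0]
        ring

lemma stepSum (hn : 1 ≤ n) {σ s₀ : ℝ} (hσ : 0 < σ) {k : ℕ} (hk : k ≤ n) (r : E n) :
    ∑ p ∈ atomF n T k r, (∏ j ∈ Finset.Ico k n, rho n T σ j p) *
        Shat n σ s₀ (tauh n T (k+1) p) p
      = Shat n σ s₀ (tauh n T k r) r := by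
  by_cases htop : tauh n T k r = n
  · rw [atomF_top n T htop, Finset.sum_singleton]
    have h1 : tauh n T (k+1) r = n :=
      le_antisymm (tauh_le n T _ _) (by have := tauh_mono n T (Nat.le_add_right k 1) r; omega)
    have hprod : ∏ j ∈ Finset.Ico k n, rho n T σ j r = 1 := by
      refine Finset.prod_eq_one (fun j hj => ?_)
      rw [Finset.mem_Ico] at hj
      have e1 : tauh n T j r = n :=
        le_antisymm (tauh_le n T _ _) (by have := tauh_mono n T hj.1 r; omega)
      have e2 : tauh n T (j+1) r = n :=
        le_antisymm (tauh_le n T _ _) (by have := tauh_mono n T (Nat.le_add_right j 1) r; omega)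
      exact rho_eq_one n T (by rw [e1, e2])
    rw [hprod, one_mul, h1, htop]
  · have hkn : k < n := by
      by_contra h
      push_neg at h
      exact htop (tauh_top n T h r)
    by_cases hbu : bib n T true k r = tauh n T k r
    · have hcongr : ∀ p ∈ atomF n T k r,
          (∏ j ∈ Finset.Ico k n, rho n T σ j p) * Shat n σ s₀ (tauh n T (k+1) p) p
            = (∏ j ∈ Finset.Ico k n, rho n T σ j p) * Shat n σ s₀ (tauh n T k r) r := by
        intro p hp
        rw [all_eq_of_bib_eq n T hbu hp, Shat_agree n ((mem_atomF n T).1 hp) le_rfl]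
      rw [Finset.sum_congr rfl hcongr, ← Finset.sum_mul,
        treeSum n T hn hσ (n - k) k (by omega) r, one_mul]
    · have hv : tauh n T k r < bib n T true k r :=
        lt_of_le_of_ne (le_bib n T k r true) (Ne.symm hbu)
      have hvf : tauh n T k r < bib n T false k r := lt_bib_other n T hv
      have hbT : tauh n T (k+1) (padAbove n (tauh n T k r) true r) = bib n T true k r := rfl
      have hbF : tauh n T (k+1) (padAbove n (tauh n T k r) false r) = bib n T false k r := rfl
      have hrunT : runIs n (tauh n T k r) (bib n T true k r) true
          (padAbove n (tauh n T k r) true r) :=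
        fun i h1 _ => if_neg (not_lt.2 h1)
      have hrunF : runIs n (tauh n T k r) (bib n T false k r) false
          (padAbove n (tauh n T k r) false r) :=
        fun i h1 _ => if_neg (not_lt.2 h1)
      have hSpadT : Shat n σ s₀ (tauh n T k r) (padAbove n (tauh n T k r) true r)
          = Shat n σ s₀ (tauh n T k r) r :=
        Shat_agree n (fun i hi => if_pos hi) le_rfl
      have hSpadF : Shat n σ s₀ (tauh n T k r) (padAbove n (tauh n T k r) false r)
          = Shat n σ s₀ (tauh n T k r) r :=
        Shat_agree n (fun i hi => if_pos hi) le_rfl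
      have hSbT : ∀ p, agr n (bib n T true k r) p (padAbove n (tauh n T k r) true r) →
          Shat n σ s₀ (bib n T true k r) p = Shat n σ s₀ (tauh n T k r) r *
            Real.exp (cc n σ * ((bib n T true k r - tauh n T k r : ℕ) : ℝ)) := by
        intro p hagr
        rw [Shat_agree n hagr le_rfl,
          Shat_run n hrunT (le_of_lt hv) (bib_le n T k r true), hSpadT]
        simp
      have hSbF : ∀ p, agr n (bib n T false k r) p (padAbove n (tauh n T k r) false r) →
          Shat n σ s₀ (bib n T false k r) p = Shat n σ s₀ (tauh n T k r) r *
            Real.exp (-(cc n σ * ((bib n T false k r - tauh n T k r : ℕ) : ℝ))) := by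
        intro p hagr
        rw [Shat_agree n hagr le_rfl,
          Shat_run n hrunF (le_of_lt hvf) (bib_le n T k r false), hSpadF]
        have : cc n σ * ((bib n T false k r - tauh n T k r : ℕ) : ℝ) * (if false then (1:ℝ) else -1)
            = -(cc n σ * ((bib n T false k r - tauh n T k r : ℕ) : ℝ)) := by
          simp
        rw [this]
      rw [← Finset.sum_filter_add_sum_filter_not (atomF n T k r)
        (fun p => agr n (bib n T true k r) p (padAbove n (tauh n T k r) true r))]
      rw [← Finset.sum_filter_add_sum_filter_not ((atomF n T k r).filter
        (fun p => ¬ agr n (bib n T true k r) p (padAbove n (tauh n T k r) true r)))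
        (fun p => agr n (bib n T false k r) p (padAbove n (tauh n T k r) false r))]
      have hfT : (atomF n T k r).filter
          (fun p => agr n (bib n T true k r) p (padAbove n (tauh n T k r) true r))
          = atomF n T (k+1) (padAbove n (tauh n T k r) true r) := by
        ext p
        simp only [Finset.mem_filter, mem_atomF, hbT]
        exact ⟨fun h => h.2, fun h => ⟨(mem_atomF n T).1 (mem_branch n T hv h).1, h⟩⟩
      have hfF : ((atomF n T k r).filter
          (fun p => ¬ agr n (bib n T true k r) p (padAbove n (tauh n T k r) true r))).filter
          (fun p => agr n (bib n T false k r) p (padAbove n (tauh n T k r) false r))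
          = atomF n T (k+1) (padAbove n (tauh n T k r) false r) := by
        ext p
        simp only [Finset.mem_filter, mem_atomF, hbF]
        constructor
        · exact fun h => h.2
        · intro h
          exact ⟨⟨(mem_atomF n T).1 (mem_branch n T hvf h).1,
            fun hT => branch_disjoint n T hn hv hT h⟩, h⟩
      have hsT : ∑ p ∈ (atomF n T k r).filter
          (fun p => agr n (bib n T true k r) p (padAbove n (tauh n T k r) true r)),
          (∏ j ∈ Finset.Ico k n, rho n T σ j p) * Shat n σ s₀ (tauh n T (k+1) p) p
          = qq n T σ k r * (Shat n σ s₀ (tauh n T k r) r *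
              Real.exp (cc n σ * ((bib n T true k r - tauh n T k r : ℕ) : ℝ))) := by
        rw [hfT]
        have hterm : ∀ p ∈ atomF n T (k+1) (padAbove n (tauh n T k r) true r),
            (∏ j ∈ Finset.Ico k n, rho n T σ j p) * Shat n σ s₀ (tauh n T (k+1) p) p
              = (qq n T σ k r * (Shat n σ s₀ (tauh n T k r) r *
                  Real.exp (cc n σ * ((bib n T true k r - tauh n T k r : ℕ) : ℝ))))
                * ∏ j ∈ Finset.Ico (k+1) n, rho n T σ j p := by
          intro p hp
          rw [mem_atomF, hbT] at hp
          obtain ⟨hmem, hb, _⟩ := mem_branch n T hv hp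
          rw [Finset.prod_eq_prod_Ico_succ_bot hkn, rho_branch_true n T hv hp, hb, hSbT p hp]
          ring
        rw [Finset.sum_congr rfl hterm, ← Finset.mul_sum,
          treeSum n T hn hσ (n - (k+1)) (k+1) (by omega) _, mul_one]
      have hsF : ∑ p ∈ ((atomF n T k r).filter
          (fun p => ¬ agr n (bib n T true k r) p (padAbove n (tauh n T k r) true r))).filter
          (fun p => agr n (bib n T false k r) p (padAbove n (tauh n T k r) false r)),
          (∏ j ∈ Finset.Ico k n, rho n T σ j p) * Shat n σ s₀ (tauh n T (k+1) p) p
          = (1 - qq n T σ k r) * (Shat n σ s₀ (tauh n T k r) r *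
              Real.exp (-(cc n σ * ((bib n T false k r - tauh n T k r : ℕ) : ℝ)))) := by
        rw [hfF]
        have hterm : ∀ p ∈ atomF n T (k+1) (padAbove n (tauh n T k r) false r),
            (∏ j ∈ Finset.Ico k n, rho n T σ j p) * Shat n σ s₀ (tauh n T (k+1) p) p
              = ((1 - qq n T σ k r) * (Shat n σ s₀ (tauh n T k r) r *
                  Real.exp (-(cc n σ * ((bib n T false k r - tauh n T k r : ℕ) : ℝ)))))
                * ∏ j ∈ Finset.Ico (k+1) n, rho n T σ j p := by
          intro p hp
          rw [mem_atomF, hbF] at hp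
          obtain ⟨hmem, hb, _⟩ := mem_branch n T hvf hp
          rw [Finset.prod_eq_prod_Ico_succ_bot hkn, rho_branch_false n T hn hv hp, hb,
            hSbF p hp]
          ring
        rw [Finset.sum_congr rfl hterm, ← Finset.mul_sum,
          treeSum n T hn hσ (n - (k+1)) (k+1) (by omega) _, mul_one]
      have hs0 : ∑ p ∈ ((atomF n T k r).filter
          (fun p => ¬ agr n (bib n T true k r) p (padAbove n (tauh n T k r) true r))).filter
          (fun p => ¬ agr n (bib n T false k r) p (padAbove n (tauh n T k r) false r)),
          (∏ j ∈ Finset.Ico k n, rho n T σ j p) * Shat n σ s₀ (tauh n T (k+1) p) p = 0 := by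
        refine Finset.sum_eq_zero (fun p hp => ?_)
        rw [Finset.mem_filter, Finset.mem_filter] at hp
        rw [Finset.prod_eq_zero (Finset.mem_Ico.2 ⟨le_rfl, hkn⟩)
          (rho_eq_zero n T hn hv hp.1.1 hp.1.2 hp.2), zero_mul]
      rw [hsT, hsF, hs0]
      have hid := (qq_spec n T hn hσ hv).2.2
      linear_combination Shat n σ s₀ (tauh n T k r) r * hid

lemma rho_of_mem {σ : ℝ} {j k : ℕ} {r p : E n} (hj : j < k) (hp : p ∈ atomF n T k r) :
    rho n T σ j p = rho n T σ j r := by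
  have hagr := (mem_atomF n T).1 hp
  have e1 : tauh n T j p = tauh n T j r := tauh_of_mem_le n T (le_of_lt hj) hp
  have e2 : tauh n T (j+1) p = tauh n T (j+1) r := tauh_of_mem_le n T hj hp
  have hble : tauh n T (j+1) r ≤ tauh n T k r := tauh_mono n T hj r
  have hale : tauh n T j r ≤ tauh n T k r := tauh_mono n T (le_of_lt hj) r
  have epad : ∀ v, padAbove n (tauh n T j p) v p = padAbove n (tauh n T j r) v r := by
    intro v
    funext i
    unfold padAbove
    rw [e1]
    by_cases hi : (i : ℕ) < tauh n T j r
    · rw [if_pos hi, if_pos hi]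
      exact hagr i (lt_of_lt_of_le hi hale)
    · rw [if_neg hi, if_neg hi]
  have ebib : ∀ v, bib n T v j p = bib n T v j r := by
    intro v
    unfold bib
    rw [epad v]
  have eqq : qq n T σ j p = qq n T σ j r := by
    unfold qq
    rw [ebib true, ebib false, e1]
  have erun : ∀ v, runIs n (tauh n T j r) (tauh n T (j+1) r) v p ↔
      runIs n (tauh n T j r) (tauh n T (j+1) r) v r := by
    intro v
    constructor <;> intro h i h1 h2
    · rw [← hagr i (lt_of_lt_of_le h2 hble)]
      exact h i h1 h2
    · rw [hagr i (lt_of_lt_of_le h2 hble)]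
      exact h i h1 h2
  unfold rho
  rw [e1, e2, eqq]
  rcases em (tauh n T (j+1) r = tauh n T j r) with h | h
  · rw [if_pos h, if_pos h]
  rw [if_neg h, if_neg h]
  rcases em (runIs n (tauh n T j r) (tauh n T (j+1) r) true r) with hT | hT
  · rw [if_pos ((erun true).2 hT), if_pos hT]
  rw [if_neg (fun hh => hT ((erun true).1 hh)), if_neg hT]
  rcases em (runIs n (tauh n T j r) (tauh n T (j+1) r) false r) with hF | hF
  · rw [if_pos ((erun false).2 hF), if_pos hF]
  · rw [if_neg (fun hh => hF ((erun false).1 hh)), if_neg hF]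

lemma master (hn : 1 ≤ n) {σ s₀ : ℝ} (hσ : 0 < σ) {k : ℕ} (hk : k ≤ n) (B : Finset (E n))
    (hB : ∀ p ∈ B, ∀ p' : E n, agr n (tauh n T k p) p' p → p' ∈ B) :
    ∑ p ∈ B, fhat n T σ p * Shat n σ s₀ (tauh n T (k+1) p) p
      = ∑ p ∈ B, fhat n T σ p * Shat n σ s₀ (tauh n T k p) p := by
  classical
  set rep : E n → E n := fun p => padAbove n (tauh n T k p) false p with hrep
  have hagr_rep : ∀ p : E n, agr n (tauh n T k p) (rep p) p := by
    intro p i hi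
    show (if (i:ℕ) < tauh n T k p then p i else false) = p i
    rw [if_pos hi]
  have htau_rep : ∀ p, tauh n T k (rep p) = tauh n T k p :=
    fun p => tauh_agree n T (agr_symm n (hagr_rep p)) le_rfl
  have hmem_rep : ∀ p r : E n, rep p = r → p ∈ atomF n T k r := by
    intro p r hpr
    refine (mem_atomF n T).2 (fun i hi => ?_)
    have ht : tauh n T k r = tauh n T k p := by rw [← hpr, htau_rep p]
    rw [ht] at hi
    rw [← hpr]
    exact (hagr_rep p i hi).symm
  have hrep_fix : ∀ p, rep (rep p) = rep p := by
    intro p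
    funext i
    show (if (i:ℕ) < tauh n T k (rep p) then rep p i else false) = rep p i
    rw [htau_rep p]
    by_cases hi : (i:ℕ) < tauh n T k p
    · rw [if_pos hi]
    · rw [if_neg hi]
      show false = (if (i:ℕ) < tauh n T k p then p i else false)
      rw [if_neg hi]
  have hmem_iff : ∀ r : E n, rep r = r → ∀ p, (rep p = r ↔ p ∈ atomF n T k r) := by
    intro r hr p
    constructor
    · exact hmem_rep p r
    · intro hp
      have ht : tauh n T k p = tauh n T k r := tauh_of_mem n T hp
      funext i
      show (if (i:ℕ) < tauh n T k p then p i else false) = r i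
      rw [ht]
      by_cases hi : (i:ℕ) < tauh n T k r
      · rw [if_pos hi]
        exact (mem_atomF n T).1 hp i hi
      · rw [if_neg hi]
        have h2 : r i = false := by
          rw [← congrFun hr i]
          show (if (i:ℕ) < tauh n T k r then r i else false) = false
          rw [if_neg hi]
        exact h2.symm
  have hmaps : ∀ p ∈ B, rep p ∈ B.image rep := fun p hp => Finset.mem_image_of_mem rep hp
  rw [← Finset.sum_fiberwise_of_maps_to hmaps
      (fun p => fhat n T σ p * Shat n σ s₀ (tauh n T (k+1) p) p),
    ← Finset.sum_fiberwise_of_maps_to hmaps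
      (fun p => fhat n T σ p * Shat n σ s₀ (tauh n T k p) p)]
  refine Finset.sum_congr rfl (fun r hr => ?_)
  obtain ⟨p₀, hp₀B, hp₀⟩ := Finset.mem_image.1 hr
  have hrfix : rep r = r := by
    rw [← hp₀]
    exact hrep_fix p₀
  have hrB : r ∈ B := by
    rw [← hp₀]
    exact hB p₀ hp₀B (rep p₀) (hagr_rep p₀)
  have hfib : B.filter (fun p => rep p = r) = atomF n T k r := by
    ext p
    rw [Finset.mem_filter]
    constructor
    · exact fun h => (hmem_iff r hrfix p).1 h.2
    · intro h
      exact ⟨hB r hrB p ((mem_atomF n T).1 h), (hmem_iff r hrfix p).2 h⟩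
  rw [hfib]
  have hC : ∀ p ∈ atomF n T k r, fhat n T σ p
      = (2^n * ∏ j ∈ Finset.range k, rho n T σ j r) * ∏ j ∈ Finset.Ico k n, rho n T σ j p := by
    intro p hp
    unfold fhat
    rw [← Finset.prod_range_mul_prod_Ico (fun j => rho n T σ j p) hk]
    have : ∏ j ∈ Finset.range k, rho n T σ j p = ∏ j ∈ Finset.range k, rho n T σ j r :=
      Finset.prod_congr rfl (fun j hj => rho_of_mem n T (Finset.mem_range.1 hj) hp)
    rw [this, mul_assoc]
  have hL : ∑ p ∈ atomF n T k r, fhat n T σ p * Shat n σ s₀ (tauh n T (k+1) p) p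
      = (2^n * ∏ j ∈ Finset.range k, rho n T σ j r) * Shat n σ s₀ (tauh n T k r) r := by
    have hterm : ∀ p ∈ atomF n T k r,
        fhat n T σ p * Shat n σ s₀ (tauh n T (k+1) p) p
          = (2^n * ∏ j ∈ Finset.range k, rho n T σ j r) *
              ((∏ j ∈ Finset.Ico k n, rho n T σ j p) * Shat n σ s₀ (tauh n T (k+1) p) p) := by
      intro p hp
      rw [hC p hp]
      ring
    rw [Finset.sum_congr rfl hterm, ← Finset.mul_sum, stepSum n T hn hσ hk r]
  have hR : ∑ p ∈ atomF n T k r, fhat n T σ p * Shat n σ s₀ (tauh n T k p) p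
      = (2^n * ∏ j ∈ Finset.range k, rho n T σ j r) * Shat n σ s₀ (tauh n T k r) r := by
    have hterm : ∀ p ∈ atomF n T k r,
        fhat n T σ p * Shat n σ s₀ (tauh n T k p) p
          = ((2^n * ∏ j ∈ Finset.range k, rho n T σ j r) * Shat n σ s₀ (tauh n T k r) r) *
              ∏ j ∈ Finset.Ico k n, rho n T σ j p := by
      intro p hp
      rw [hC p hp, tauh_of_mem n T hp, Shat_agree n ((mem_atomF n T).1 hp) le_rfl]
      ring
    rw [Finset.sum_congr rfl hterm, ← Finset.mul_sum,
      treeSum n T hn hσ (n - k) k (by omega) r, mul_one]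
  rw [hL, hR]

lemma rho_nonneg (hn : 1 ≤ n) {σ : ℝ} (hσ : 0 < σ) (k : ℕ) (p : E n) :
    0 ≤ rho n T σ k p := by
  unfold rho
  rcases em (tauh n T (k+1) p = tauh n T k p) with h | h
  · rw [if_pos h]
    norm_num
  rw [if_neg h]
  have hv : tauh n T k p < bib n T true k p := by
    by_contra hc
    push_neg at hc
    have h0 := le_bib n T k p true
    have := all_eq_of_bib_eq n T (le_antisymm hc h0) (self_mem_atomF n T k p)
    exact h this
  have hq := qq_spec n T hn hσ hv
  rcases em (runIs n (tauh n T k p) (tauh n T (k+1) p) true p) with hT | hT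
  · rw [if_pos hT]
    exact hq.1
  rw [if_neg hT]
  rcases em (runIs n (tauh n T k p) (tauh n T (k+1) p) false p) with hF | hF
  · rw [if_pos hF]
    linarith [hq.2.1]
  · rw [if_neg hF]

lemma fhat_nonneg (hn : 1 ≤ n) {σ : ℝ} (hσ : 0 < σ) (p : E n) : 0 ≤ fhat n T σ p := by
  unfold fhat
  refine mul_nonneg (by positivity) (Finset.prod_nonneg fun j _ => rho_nonneg n T hn hσ j p)

lemma sum_fhat (hn : 1 ≤ n) {σ : ℝ} (hσ : 0 < σ) (r : E n) :
    ∑ p : E n, fhat n T σ p = 2^n := by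
  have h0 : atomF n T 0 r = Finset.univ := by
    ext p
    simp only [mem_atomF, Finset.mem_univ, iff_true, tauh_zero]
    intro i hi
    omega
  have := treeSum n T hn hσ n 0 (by omega) r
  rw [h0] at this
  unfold fhat
  rw [← Finset.mul_sum]
  have h1 : ∀ p : E n, ∏ j ∈ Finset.range n, rho n T σ j p
      = ∏ j ∈ Finset.Ico 0 n, rho n T σ j p := by
    intro p
    rw [Finset.range_eq_Ico]
  rw [Finset.sum_congr rfl (fun p _ => h1 p), this, mul_one]

end Core

end QP

namespace QP

section MeasGlue

open scoped NNReal ENNReal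

variable (n : ℕ)

lemma measurable_factor {α : Type*} [MeasurableSpace α] (H : E n → α) :
    Measurable (fun ω => H (restr n ω)) :=
  (measurable_of_countable H).comp (measurable_restr n)

lemma P_cyl (P : Measure BinOmega) (hP : IsFairCoin P) (p : E n) :
    P (restr n ⁻¹' {p}) = (1/2 : ENNReal) ^ n := by
  have hs := hP.2 (Finset.Icc 1 n) (lift n p) (fun i hi => (Finset.mem_Icc.1 hi).1)
  have hset : {ω : BinOmega | ∀ i ∈ Finset.Icc 1 n, ω i = lift n p i}
      = restr n ⁻¹' {p} := by
    ext ω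
    simp only [Set.mem_setOf_eq, Set.mem_preimage, Set.mem_singleton_iff]
    constructor
    · intro h
      funext i
      have hmem : (i : ℕ) + 1 ∈ Finset.Icc 1 n := Finset.mem_Icc.2 ⟨by omega, by omega⟩
      have := h ((i : ℕ) + 1) hmem
      rw [lift_eq_of_agree (by omega) (by omega)] at this
      show ω ((i : ℕ) + 1) = p i
      rw [this]
      congr 1
    · intro h i hi
      rw [Finset.mem_Icc] at hi
      rw [← h, lift_restr n hi.1 hi.2]
  rw [← hset, hs, Nat.card_Icc]
  norm_num

lemma integrable_factor (μ : Measure BinOmega) [IsFiniteMeasure μ] (H : E n → ℝ) :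
    Integrable (fun ω => H (restr n ω)) μ := by
  refine ⟨(measurable_factor n H).aestronglyMeasurable, ?_⟩
  refine HasFiniteIntegral.of_bounded (C := ∑ p : E n, |H p|) (ae_of_all μ fun ω => ?_)
  calc ‖H (restr n ω)‖ = |H (restr n ω)| := rfl
  _ ≤ ∑ p : E n, |H p| :=
      Finset.single_le_sum (fun p _ => abs_nonneg (H p)) (Finset.mem_univ _)

lemma integral_factor (P : Measure BinOmega) [IsProbabilityMeasure P] (hP : IsFairCoin P)
    (H : E n → ℝ) :
    ∫ ω, H (restr n ω) ∂P = ((2:ℝ)⁻¹)^n * ∑ p : E n, H p := by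
  have hmeas : ∀ p : E n, MeasurableSet (restr n ⁻¹' {p}) :=
    fun p => measurable_restr n (measurableSet_singleton p)
  have hrw : (fun ω => H (restr n ω))
      = fun ω => ∑ p : E n, Set.indicator (restr n ⁻¹' {p}) (fun _ => H p) ω := by
    funext ω
    rw [Finset.sum_eq_single_of_mem (restr n ω) (Finset.mem_univ _)]
    · exact (Set.indicator_of_mem (Set.mem_preimage.2 rfl) (fun _ => H (restr n ω))).symm
    · intro q _ hq
      refine Set.indicator_of_notMem ?_ _
      simp only [Set.mem_preimage, Set.mem_singleton_iff]
      exact fun hc => hq hc.symm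
  rw [hrw, integral_finset_sum _
    (fun p _ => (integrable_const (H p)).indicator (hmeas p))]
  have hterm : ∀ p : E n, ∫ ω, Set.indicator (restr n ⁻¹' {p}) (fun _ => H p) ω ∂P
      = ((2:ℝ)⁻¹)^n * H p := by
    intro p
    rw [integral_indicator_const (H p) (hmeas p), measureReal_def, P_cyl n P hP p, smul_eq_mul]
    congr 1
    rw [ENNReal.toReal_pow]
    congr 1
    simp [ENNReal.toReal_div]
  rw [Finset.sum_congr rfl (fun p _ => hterm p), ← Finset.mul_sum]

variable (T : BinStopSystem n)

/-- The density of `Q(𝕋)` with respect to `P`, as a nonnegative function. -/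
noncomputable def Qdens (σ : ℝ) : BinOmega → ℝ≥0 :=
  fun ω => Real.toNNReal (fhat n T σ (restr n ω))

/-- The measure `Q(𝕋)`. -/
noncomputable def Qmeas (σ : ℝ) (P : Measure BinOmega) : Measure BinOmega :=
  P.withDensity (fun ω => (Qdens n T σ ω : ℝ≥0∞))

lemma measurable_Qdens (σ : ℝ) : Measurable (Qdens n T σ) :=
  measurable_factor n (fun p => Real.toNNReal (fhat n T σ p))

lemma Qmeas_ac (σ : ℝ) (P : Measure BinOmega) : Qmeas n T σ P ≪ P :=
  withDensity_absolutelyContinuous P _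

lemma integral_Q (hn : 1 ≤ n) {σ : ℝ} (hσ : 0 < σ) (P : Measure BinOmega)
    [IsProbabilityMeasure P] (hP : IsFairCoin P) (H : E n → ℝ) :
    ∫ ω, H (restr n ω) ∂(Qmeas n T σ P)
      = ((2:ℝ)⁻¹)^n * ∑ p : E n, fhat n T σ p * H p := by
  unfold Qmeas
  rw [integral_withDensity_eq_integral_smul (measurable_Qdens n T σ) _]
  have hptw : (fun ω => Qdens n T σ ω • H (restr n ω))
      = fun ω => (fun p => fhat n T σ p * H p) (restr n ω) := by
    funext ω
    show (Qdens n T σ ω : ℝ) * H (restr n ω) = _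
    unfold Qdens
    rw [Real.coe_toNNReal _ (fhat_nonneg n T hn hσ _)]
  rw [hptw]
  exact integral_factor n P hP (fun p => fhat n T σ p * H p)

lemma setIntegral_Q (hn : 1 ≤ n) {σ : ℝ} (hσ : 0 < σ) (P : Measure BinOmega)
    [IsProbabilityMeasure P] (hP : IsFairCoin P) (B : Finset (E n)) (H : E n → ℝ) :
    ∫ ω in restr n ⁻¹' ↑B, H (restr n ω) ∂(Qmeas n T σ P)
      = ((2:ℝ)⁻¹)^n * ∑ p ∈ B, fhat n T σ p * H p := by
  classical
  rw [← integral_indicator (measurable_restr n (B : Set (E n)).toFinite.measurableSet)]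
  have hptw : (fun ω => Set.indicator (restr n ⁻¹' ↑B) (fun ω' => H (restr n ω')) ω)
      = fun ω => (fun p => Set.indicator ↑B H p) (restr n ω) := by
    funext ω
    simp only [Set.indicator_apply, Set.mem_preimage]
  rw [hptw, integral_Q n T hn hσ P hP (fun p => Set.indicator ↑B H p)]
  congr 1
  have : ∀ p : E n, fhat n T σ p * Set.indicator (↑B) H p
      = if p ∈ B then fhat n T σ p * H p else 0 := by
    intro p
    simp only [Set.indicator_apply, Finset.mem_coe, mul_ite, mul_zero]
  rw [Finset.sum_congr rfl (fun p _ => this p), ← Finset.sum_filter,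
    Finset.filter_mem_eq_inter, Finset.univ_inter]

lemma Qmeas_univ (hn : 1 ≤ n) {σ : ℝ} (hσ : 0 < σ) (P : Measure BinOmega)
    [IsProbabilityMeasure P] (hP : IsFairCoin P) :
    Qmeas n T σ P Set.univ = 1 := by
  unfold Qmeas
  rw [withDensity_apply _ MeasurableSet.univ, setLIntegral_univ]
  rw [lintegral_coe_eq_integral (Qdens n T σ)
    (by
      have : (fun ω => (Qdens n T σ ω : ℝ))
          = fun ω => (fun p => ((fhat n T σ p).toNNReal : ℝ)) (restr n ω) := rfl
      rw [this]
      exact integrable_factor n P (fun p => ((fhat n T σ p).toNNReal : ℝ)))]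
  have hval : ∫ ω, (Qdens n T σ ω : ℝ) ∂P = 1 := by
    have h1 : (fun ω => (Qdens n T σ ω : ℝ))
        = fun ω => (fun p => fhat n T σ p) (restr n ω) := by
      funext ω
      show ((fhat n T σ (restr n ω)).toNNReal : ℝ) = _
      rw [Real.coe_toNNReal _ (fhat_nonneg n T hn hσ _)]
    rw [h1, integral_factor n P hP _, sum_fhat n T hn hσ (fun _ => false)]
    rw [← mul_pow]
    norm_num
  rw [hval]
  exact ENNReal.ofReal_one

end MeasGlue

end QP

namespace QP

open scoped NNReal ENNReal

section Support

variable (n : ℕ) (T : BinStopSystem n)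

/-- The support event: all inter-stopping increments are monotone runs. -/
def Good : Set BinOmega :=
  {ω | ∀ k, T.τ k ω < n → MonotoneRun (T.τ k ω) (T.τ (k + 1) ω) ω}

lemma monotoneRun_iff_runIs {a b : ℕ} (hb : b ≤ n) (ω : BinOmega) :
    MonotoneRun a b ω ↔
      (runIs n a b true (restr n ω) ∨ runIs n a b false (restr n ω)) := by
  unfold MonotoneRun runIs
  constructor
  · rintro (h | h)
    · exact Or.inl (fun i h1 h2 => h ((i:ℕ)+1) (by omega) (by omega))
    · exact Or.inr (fun i h1 h2 => h ((i:ℕ)+1) (by omega) (by omega))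
  · rintro (h | h)
    · refine Or.inl (fun i h1 h2 => ?_)
      have := h ⟨i - 1, by omega⟩ (show a ≤ i - 1 by omega) (show i - 1 < b by omega)
      show ω i = true
      rw [← this]
      show ω i = ω (i - 1 + 1)
      congr 1
      omega
    · refine Or.inr (fun i h1 h2 => ?_)
      have := h ⟨i - 1, by omega⟩ (show a ≤ i - 1 by omega) (show i - 1 < b by omega)
      show ω i = false
      rw [← this]
      show ω i = ω (i - 1 + 1)
      congr 1
      omega

/-- The support event on path space. -/
def GoodS : Set (E n) :=
  {p | ∀ k, tauh n T k p < n →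
    (runIs n (tauh n T k p) (tauh n T (k+1) p) true p
      ∨ runIs n (tauh n T k p) (tauh n T (k+1) p) false p)}

lemma good_eq : Good n T = restr n ⁻¹' GoodS n T := by
  ext ω
  simp only [Good, GoodS, Set.mem_setOf_eq, Set.mem_preimage]
  constructor <;> intro h k hk
  · have hk' : T.τ k ω < n := by rw [tau_eq_tauh n T k ω]; exact hk
    have hm := (monotoneRun_iff_runIs n (T.le_n (k+1) ω) ω).1 (h k hk')
    rw [tau_eq_tauh n T k ω, tau_eq_tauh n T (k+1) ω] at hm
    exact hm
  · have hk' : tauh n T k (restr n ω) < n := by rw [← tau_eq_tauh n T k ω]; exact hk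
    have hm := h k hk'
    rw [← tau_eq_tauh n T k ω, ← tau_eq_tauh n T (k+1) ω] at hm
    exact (monotoneRun_iff_runIs n (T.le_n (k+1) ω) ω).2 hm

lemma measurableSet_good : MeasurableSet (Good n T) := by
  rw [good_eq]
  exact measurable_restr n (Set.toFinite (GoodS n T)).measurableSet

lemma fhat_eq_zero_of_not_good {σ : ℝ} {ω : BinOmega} (hω : ω ∉ Good n T) :
    fhat n T σ (restr n ω) = 0 := by
  rw [good_eq] at hω
  simp only [Set.mem_preimage, GoodS, Set.mem_setOf_eq, not_forall] at hω
  obtain ⟨k, hk, hrun⟩ := hω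
  push_neg at hrun
  have hkn : k < n := by
    by_contra hc
    push_neg at hc
    rw [tauh_top n T hc] at hk
    omega
  unfold fhat
  rw [Finset.prod_eq_zero (Finset.mem_range.2 hkn) ?_, mul_zero]
  have hab : tauh n T (k+1) (restr n ω) ≠ tauh n T k (restr n ω) := by
    intro he
    refine hrun.1 (fun i h1 h2 => ?_)
    rw [he] at h2
    exact ((lt_irrefl _ (lt_of_le_of_lt h1 h2)).elim)
  unfold rho
  rw [if_neg hab, if_neg hrun.1, if_neg hrun.2]

lemma Qmeas_good {σ : ℝ} (P : Measure BinOmega) :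
    Qmeas n T σ P ((Good n T)ᶜ) = 0 := by
  unfold Qmeas
  rw [withDensity_apply _ (measurableSet_good n T).compl]
  have hzero : ∀ ω ∈ (Good n T)ᶜ, (Qdens n T σ ω : ℝ≥0∞) = 0 := by
    intro ω hω
    unfold Qdens
    rw [fhat_eq_zero_of_not_good n T hω]
    simp
  calc ∫⁻ ω in (Good n T)ᶜ, (Qdens n T σ ω : ℝ≥0∞) ∂P
      = ∫⁻ _ in (Good n T)ᶜ, 0 ∂P :=
        setLIntegral_congr_fun (measurableSet_good n T).compl hzero
    _ = 0 := lintegral_zero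

lemma good_ae {σ : ℝ} (P : Measure BinOmega) :
    ∀ᵐ ω ∂(Qmeas n T σ P), ∀ k, T.τ k ω < n →
      MonotoneRun (T.τ k ω) (T.τ (k + 1) ω) ω := by
  refine ae_iff.2 ?_
  have : {ω : BinOmega | ¬ ∀ k, T.τ k ω < n → MonotoneRun (T.τ k ω) (T.τ (k + 1) ω) ω}
      = (Good n T)ᶜ := rfl
  rw [this]
  exact Qmeas_good n T P

lemma ae_good_of_ae {Q' : Measure BinOmega}
    (h : ∀ᵐ ω ∂Q', ∀ k, T.τ k ω < n → MonotoneRun (T.τ k ω) (T.τ (k + 1) ω) ω) :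
    Q' ((Good n T)ᶜ) = 0 := by
  have := ae_iff.1 h
  exact this

end Support

section Stopped

variable (n : ℕ) (T : BinStopSystem n)

lemma ev_meas {i j : ℕ} (h1 : 1 ≤ i) (h2 : i ≤ j) :
    Measurable[coordMS j] (fun ω : BinOmega => ω i) := by
  have hle : MeasurableSpace.comap (fun ω : BinOmega => ω i) inferInstance ≤ coordMS j :=
    le_trans le_rfl (le_iSup₂ (f := fun (i : ℕ) (_ : i ∈ Finset.Icc 1 j) =>
      MeasurableSpace.comap (fun ω : BinOmega => ω i) inferInstance) i
      (Finset.mem_Icc.2 ⟨h1, h2⟩))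
  exact fun s hs => hle _ ⟨s, hs, rfl⟩

lemma binSd_meas (σ s₀ : ℝ) (j : ℕ) : Measurable[coordMS j] (binSd n σ s₀ j) := by
  unfold binSd
  have hsum : Measurable[coordMS j] fun ω => ∑ i ∈ Finset.Icc 1 j, zeta i ω := by
    refine Finset.measurable_sum _ (fun i hi => ?_)
    rw [Finset.mem_Icc] at hi
    exact (measurable_from_top (f := fun b : Bool => if b then (1:ℝ) else -1)).comp
      (ev_meas hi.1 hi.2)
  exact (Real.measurable_exp.comp (hsum.const_mul _)).const_mul s₀

lemma X_meas (σ s₀ : ℝ) (k : ℕ) :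
    Measurable[(T.stopping k).measurableSpace] (fun ω => binSd n σ s₀ (T.τ k ω) ω) := by
  have hsv : (fun ω => binSd n σ s₀ (T.τ k ω) ω)
      = stoppedValue (fun j ω => binSd n σ s₀ j ω) (fun ω => ((T.τ k ω : ℕ) : WithTop ℕ)) := rfl
  rw [hsv]
  refine measurable_stoppedValue ?_ (T.stopping k)
  exact StronglyAdapted.isStronglyProgressive_of_discrete
    (fun j => (binSd_meas n σ s₀ j).stronglyMeasurable)

lemma stopped_ms_le (k : ℕ) :
    (T.stopping k).measurableSpace ≤ coordMS n := by
  intro s hs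
  have h := (((T.stopping k).measurableSet s).1 hs).2 n
  simp at h
  have heq : s ∩ {ω | T.τ k ω ≤ n} = s := by
    ext ω
    simp [T.le_n k ω]
  rw [heq] at h
  exact h

lemma closed_of_stopped {k : ℕ} {s : Set BinOmega}
    (hs : MeasurableSet[(T.stopping k).measurableSpace] s) :
    ∃ S : Set (E n), s = restr n ⁻¹' S ∧
      ∀ p ∈ S, ∀ p' : E n, agr n (tauh n T k p) p' p → p' ∈ S := by
  obtain ⟨S, hSeq⟩ := coordMS_iff.1 (stopped_ms_le n T k _ hs)
  refine ⟨S, hSeq, ?_⟩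
  intro p hp p' hagr
  have hlp : lift n p ∈ s := by
    rw [hSeq]
    show restr n (lift n p) ∈ S
    rw [restr_lift n p]
    exact hp
  have hms : MeasurableSet[coordMS (tauh n T k p)] (s ∩ {ω | T.τ k ω ≤ tauh n T k p}) :=
    by
      have h := (((T.stopping k).measurableSet s).1 hs).2 (tauh n T k p)
      simp at h
      exact h
  have hup : lift n p ∈ s ∩ {ω | T.τ k ω ≤ tauh n T k p} :=
    ⟨hlp, show T.τ k (lift n p) ≤ tauh n T k p from le_rfl⟩
  have hAg : AgreeC (tauh n T k p) (lift n p) (lift n p') :=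
    lift_agree n (agr_symm n hagr)
  have hmem := (mem_iff_of_agree hms hAg).1 hup
  have hlp' : lift n p' ∈ s := hmem.1
  rw [hSeq] at hlp'
  show p' ∈ S
  rw [← restr_lift n p']
  exact hlp'

lemma cyl_coordMS {a : ℕ} (ha : a ≤ n) (p : E n) :
    MeasurableSet[coordMS a] (restr n ⁻¹' {p' | agr n a p' p}) := by
  rw [coordMS_iff]
  refine ⟨{u : E a | ∀ i : Fin a, u i = p ⟨i, lt_of_lt_of_le i.2 ha⟩}, ?_⟩
  ext ω
  simp only [Set.mem_preimage, Set.mem_setOf_eq]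
  constructor
  · intro h i
    exact h ⟨(i : ℕ), lt_of_lt_of_le i.2 ha⟩ i.2
  · intro h i hi
    exact h ⟨(i : ℕ), hi⟩

lemma tau_on_cyl {a k : ℕ} {p : E n} (hk : tauh n T k p ≤ a) {ω : BinOmega}
    (hω : agr n a (restr n ω) p) : T.τ k ω = tauh n T k p := by
  rw [tau_eq_tauh n T k ω]
  exact tauh_agree n T (agr_symm n hω) hk

lemma cyl_mem_stopped (k : ℕ) (p : E n) :
    MeasurableSet[(T.stopping k).measurableSpace]
      (restr n ⁻¹' {p' | agr n (tauh n T k p) p' p}) := by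
  rw [(T.stopping k).measurableSet]
  refine ⟨?_, fun t => ?_⟩
  · exact le_iSup (fun t => coordFilt t) n _
      (coordMS_mono (tauh_le n T k p) _ (cyl_coordMS n (tauh_le n T k p) p))
  by_cases ht : tauh n T k p ≤ t
  · exact @MeasurableSet.inter _ (coordFilt t) _ _
      (coordMS_mono ht _ (cyl_coordMS n (tauh_le n T k p) p)) (T.stopping k t)
  · have : restr n ⁻¹' {p' | agr n (tauh n T k p) p' p} ∩ {ω | T.τ k ω ≤ t} = ∅ := by
      ext ω
      simp only [Set.mem_inter_iff, Set.mem_preimage, Set.mem_setOf_eq,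
        Set.mem_empty_iff_false, iff_false, not_and]
      intro hω
      rw [tau_on_cyl n T le_rfl hω]
      omega
    simp only [Nat.cast_withTop, WithTop.coe_le_coe]
    rw [this]
    exact @MeasurableSet.empty _ (coordFilt t)

end Stopped

end QP

namespace QP

open scoped NNReal ENNReal

section Mart

variable (n : ℕ) (T : BinStopSystem n)

lemma X_factor (σ s₀ : ℝ) (k : ℕ) :
    (fun ω => binSd n σ s₀ (T.τ k ω) ω)
      = fun ω => (fun p => Shat n σ s₀ (tauh n T k p) p) (restr n ω) := by
  funext ω
  show binSd n σ s₀ (T.τ k ω) ω = _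
  rw [tau_eq_tauh n T k ω, binSd_eq_Shat n (tauh_le n T k (restr n ω)) ω]

lemma X_integrable (σ s₀ : ℝ) (k : ℕ) (μ : Measure BinOmega) [IsFiniteMeasure μ] :
    Integrable (fun ω => binSd n σ s₀ (T.τ k ω) ω) μ := by
  rw [X_factor n T σ s₀ k]
  exact integrable_factor n μ (fun p => Shat n σ s₀ (tauh n T k p) p)

lemma Qmeas_mart (hn : 1 ≤ n) {σ s₀ : ℝ} (hσ : 0 < σ) (P : Measure BinOmega)
    [IsProbabilityMeasure P] (hP : IsFairCoin P) (k : ℕ) :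
    (Qmeas n T σ P)[(fun ω => binSd n σ s₀ (T.τ (k+1) ω) ω) |
        (T.stopping k).measurableSpace]
      =ᵐ[Qmeas n T σ P] fun ω => binSd n σ s₀ (T.τ k ω) ω := by
  haveI : IsProbabilityMeasure (Qmeas n T σ P) := ⟨Qmeas_univ n T hn hσ P hP⟩
  have hm : (T.stopping k).measurableSpace ≤ (inferInstance : MeasurableSpace BinOmega) :=
    (T.stopping k).measurableSpace_le
  haveI : SigmaFinite ((Qmeas n T σ P).trim hm) := inferInstance
  refine (ae_eq_condExp_of_forall_setIntegral_eq hm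
    (X_integrable n T σ s₀ (k+1) _)
    (fun s _ _ => (X_integrable n T σ s₀ k _).integrableOn)
    (fun s hs _ => ?_)
    (StronglyMeasurable.aestronglyMeasurable (X_meas n T σ s₀ k).stronglyMeasurable)).symm
  rcases le_or_gt k n with hk | hk
  · obtain ⟨S, rfl, hclosed⟩ := closed_of_stopped n T hs
    classical
    have hScoe : S = ↑S.toFinset := (Set.coe_toFinset S).symm
    rw [X_factor n T σ s₀ k, X_factor n T σ s₀ (k+1), hScoe]
    rw [setIntegral_Q n T hn hσ P hP S.toFinset (fun p => Shat n σ s₀ (tauh n T k p) p),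
      setIntegral_Q n T hn hσ P hP S.toFinset (fun p => Shat n σ s₀ (tauh n T (k+1) p) p)]
    congr 1
    exact (master n T hn hσ hk S.toFinset (fun p hp p' hagr =>
      Set.mem_toFinset.2 (hclosed p (Set.mem_toFinset.1 hp) p' hagr))).symm
  · have heq : (fun ω => binSd n σ s₀ (T.τ k ω) ω)
        = fun ω => binSd n σ s₀ (T.τ (k+1) ω) ω := by
      funext ω
      rw [tau_top_of_ge n T (by omega) ω, tau_top_of_ge n T (by omega) ω]
    rw [heq]

lemma Qmeas_isQMeasure (hn : 1 ≤ n) {σ s₀ : ℝ} (hσ : 0 < σ) (P : Measure BinOmega)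
    [IsProbabilityMeasure P] (hP : IsFairCoin P) :
    IsQMeasure n σ s₀ P (Qmeas n T σ P) T :=
  ⟨⟨Qmeas_univ n T hn hσ P hP⟩, Qmeas_ac n T σ P, good_ae n T P,
    fun k => Qmeas_mart n T hn hσ P hP k⟩

end Mart

end QP

namespace QP

open scoped NNReal ENNReal

section Unique

variable (n : ℕ) (T : BinStopSystem n)

lemma cyl_measurable (a : ℕ) (p : E n) :
    MeasurableSet (restr n ⁻¹' {p' | agr n a p' p}) :=
  measurable_restr n (Set.toFinite _).measurableSet

lemma Shat_branch {σ s₀ : ℝ} {v : Bool} {k : ℕ} {r p : E n}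
    (hv : tauh n T k r < bib n T v k r)
    (hagr : agr n (bib n T v k r) p (padAbove n (tauh n T k r) v r)) :
    Shat n σ s₀ (bib n T v k r) p = Shat n σ s₀ (tauh n T k r) r *
      Real.exp (cc n σ * ((bib n T v k r - tauh n T k r : ℕ) : ℝ) * (if v then 1 else -1)) := by
  have hrun : runIs n (tauh n T k r) (bib n T v k r) v (padAbove n (tauh n T k r) v r) :=
    fun i h1 _ => if_neg (not_lt.2 h1)
  have hSpad : Shat n σ s₀ (tauh n T k r) (padAbove n (tauh n T k r) v r)
      = Shat n σ s₀ (tauh n T k r) r :=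
    Shat_agree n (fun i hi => if_pos hi) le_rfl
  rw [Shat_agree n hagr le_rfl, Shat_run n hrun (le_of_lt hv) (bib_le n T k r v), hSpad]

lemma cyl_val {σ s₀ : ℝ} (hn : 1 ≤ n) (hσ : 0 < σ) (hs₀ : 0 < s₀) (P : Measure BinOmega)
    (Q' : Measure BinOmega) (hQ' : IsQMeasure n σ s₀ P Q' T) :
    ∀ (k : ℕ), ∀ p : E n, Q' (restr n ⁻¹' {p' | agr n (tauh n T k p) p' p})
      = ENNReal.ofReal (∏ j ∈ Finset.range k, rho n T σ j p) := by
  haveI : IsProbabilityMeasure Q' := hQ'.1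
  intro k
  induction k with
  | zero =>
      intro p
      have h0 : {p' : E n | agr n (tauh n T 0 p) p' p} = Set.univ := by
        ext p'
        simp only [Set.mem_setOf_eq, Set.mem_univ, iff_true, tauh_zero]
        intro i hi
        omega
      rw [h0, Set.preimage_univ, Finset.range_zero, Finset.prod_empty, ENNReal.ofReal_one]
      exact measure_univ
  | succ k ih =>
      intro p
      have ihp := ih p
      have hCk : (0:ℝ) ≤ ∏ j ∈ Finset.range k, rho n T σ j p :=
        Finset.prod_nonneg (fun j _ => rho_nonneg n T hn hσ j p)
      by_cases hbu : bib n T true k p = tauh n T k p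
      · have heq : tauh n T (k+1) p = tauh n T k p :=
          all_eq_of_bib_eq n T hbu (self_mem_atomF n T k p)
        rw [heq, Finset.prod_range_succ, rho_eq_one n T heq, mul_one]
        exact ihp
      · have hv : tauh n T k p < bib n T true k p :=
          lt_of_le_of_ne (le_bib n T k p true) (Ne.symm hbu)
        have hvf : tauh n T k p < bib n T false k p := lt_bib_other n T hv
        have han : tauh n T k p < n := lt_of_lt_of_le hv (bib_le n T k p true)
        -- notation
        set A : Set BinOmega := restr n ⁻¹' {p' | agr n (tauh n T k p) p' p} with hA
        set AT : Set BinOmega := restr n ⁻¹'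
          {p' | agr n (bib n T true k p) p' (padAbove n (tauh n T k p) true p)} with hAT
        set AF : Set BinOmega := restr n ⁻¹'
          {p' | agr n (bib n T false k p) p' (padAbove n (tauh n T k p) false p)} with hAF
        have hmA : MeasurableSet A := cyl_measurable n _ _
        have hmT : MeasurableSet AT := cyl_measurable n _ _
        have hmF : MeasurableSet AF := cyl_measurable n _ _
        have hTsubA : AT ⊆ A := by
          intro ω hω
          exact (mem_atomF n T).1 (mem_branch n T hv hω).1
        have hFsubA : AF ⊆ A := by
          intro ω hω
          exact (mem_atomF n T).1 (mem_branch n T hvf hω).1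
        have hTF : Disjoint AT AF := by
          rw [Set.disjoint_left]
          intro ω hT hF
          exact branch_disjoint n T hn hv hT hF
        have hNsub : A \ (AT ∪ AF) ⊆ (Good n T)ᶜ := by
          intro ω hω
          obtain ⟨hωA, hωN⟩ := hω
          have hmem : restr n ω ∈ atomF n T k p := (mem_atomF n T).2 hωA
          have hb : tauh n T k p < tauh n T (k+1) (restr n ω) := lt_tauh_succ n T hv hmem
          intro hgood
          have hτk : T.τ k ω = tauh n T k p := tau_on_cyl n T le_rfl hωA
          have hτk1 : T.τ (k+1) ω = tauh n T (k+1) (restr n ω) := tau_eq_tauh n T (k+1) ω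
          have hlt : T.τ k ω < n := by omega
          have hmono := hgood k hlt
          rw [hτk, hτk1] at hmono
          have hrun := (monotoneRun_iff_runIs n (tauh_le n T (k+1) (restr n ω)) ω).1 hmono
          rcases hrun with hrT | hrF
          · exact hωN (Or.inl (branch_eq n T hmem hrT).2)
          · exact hωN (Or.inr (branch_eq n T hmem hrF).2)
        have hNnull : Q' (A \ (AT ∪ AF)) = 0 :=
          measure_mono_null hNsub (ae_good_of_ae n T hQ'.2.2.1)
        have hsubU : AT ∪ AF ⊆ A := Set.union_subset hTsubA hFsubA
        have hQA : Q' A = Q' AT + Q' AF := by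
          have hU : Q' (AT ∪ AF) = Q' AT + Q' AF := measure_union hTF hmF
          refine le_antisymm ?_ ?_
          · calc Q' A ≤ Q' ((A \ (AT ∪ AF)) ∪ (AT ∪ AF)) :=
                  measure_mono (Set.subset_diff_union A (AT ∪ AF))
            _ ≤ Q' (A \ (AT ∪ AF)) + Q' (AT ∪ AF) := measure_union_le _ _
            _ = Q' AT + Q' AF := by rw [hNnull, zero_add, hU]
          · rw [← hU]
            exact measure_mono hsubU
        -- martingale equation
        have hm : (T.stopping k).measurableSpace
            ≤ (inferInstance : MeasurableSpace BinOmega) := (T.stopping k).measurableSpace_le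
        haveI : SigmaFinite (Q'.trim hm) := inferInstance
        have hYint : Integrable (fun ω => binSd n σ s₀ (T.τ (k+1) ω) ω) Q' :=
          X_integrable n T σ s₀ (k+1) Q'
        have hmart := hQ'.2.2.2 k
        have hmemA : MeasurableSet[(T.stopping k).measurableSpace] A := cyl_mem_stopped n T k p
        have hIeq : ∫ ω in A, binSd n σ s₀ (T.τ k ω) ω ∂Q'
            = ∫ ω in A, binSd n σ s₀ (T.τ (k+1) ω) ω ∂Q' := by
          calc ∫ ω in A, binSd n σ s₀ (T.τ k ω) ω ∂Q'
              = ∫ ω in A, (Q'[(fun ω => binSd n σ s₀ (T.τ (k+1) ω) ω) |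
                  (T.stopping k).measurableSpace]) ω ∂Q' :=
                setIntegral_congr_ae hmA (hmart.mono fun ω hω _ => hω.symm)
            _ = ∫ ω in A, binSd n σ s₀ (T.τ (k+1) ω) ω ∂Q' :=
                setIntegral_condExp hm hYint hmemA
        -- values
        set SA : ℝ := Shat n σ s₀ (tauh n T k p) p with hSA
        set eU : ℝ := Real.exp (cc n σ * ((bib n T true k p - tauh n T k p : ℕ) : ℝ)) with heU
        set eD : ℝ := Real.exp (-(cc n σ * ((bib n T false k p - tauh n T k p : ℕ) : ℝ)))
          with heD
        have hXA : ∀ ω ∈ A, binSd n σ s₀ (T.τ k ω) ω = SA := by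
          intro ω hω
          rw [tau_on_cyl n T le_rfl hω, binSd_eq_Shat n (tauh_le n T k p) ω, hSA]
          exact Shat_agree n hω le_rfl
        have hYT : ∀ ω ∈ AT, binSd n σ s₀ (T.τ (k+1) ω) ω = SA * eU := by
          intro ω hω
          have hτ : T.τ (k+1) ω = bib n T true k p := by
            rw [tau_eq_tauh n T (k+1) ω]
            exact (mem_branch n T hv hω).2.1
          rw [hτ, binSd_eq_Shat n (bib_le n T k p true) ω, Shat_branch n T hv hω]
          norm_num [hSA, heU]
        have hYF : ∀ ω ∈ AF, binSd n σ s₀ (T.τ (k+1) ω) ω = SA * eD := by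
          intro ω hω
          have hτ : T.τ (k+1) ω = bib n T false k p := by
            rw [tau_eq_tauh n T (k+1) ω]
            exact (mem_branch n T hvf hω).2.1
          rw [hτ, binSd_eq_Shat n (bib_le n T k p false) ω, Shat_branch n T hvf hω]
          have hiff : cc n σ * ((bib n T false k p - tauh n T k p : ℕ) : ℝ)
              * (if false then (1:ℝ) else -1)
              = -(cc n σ * ((bib n T false k p - tauh n T k p : ℕ) : ℝ)) := by
            norm_num
          rw [hiff, hSA, heD]
        have hIA : ∫ ω in A, binSd n σ s₀ (T.τ k ω) ω ∂Q' = (Q' A).toReal * SA := by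
          rw [setIntegral_congr_fun hmA hXA, setIntegral_const, smul_eq_mul, measureReal_def]
        have hIT : ∫ ω in AT, binSd n σ s₀ (T.τ (k+1) ω) ω ∂Q' = (Q' AT).toReal * (SA * eU) := by
          rw [setIntegral_congr_fun hmT hYT, setIntegral_const, smul_eq_mul, measureReal_def]
        have hIF : ∫ ω in AF, binSd n σ s₀ (T.τ (k+1) ω) ω ∂Q' = (Q' AF).toReal * (SA * eD) := by
          rw [setIntegral_congr_fun hmF hYF, setIntegral_const, smul_eq_mul, measureReal_def]
        have hIY : ∫ ω in A, binSd n σ s₀ (T.τ (k+1) ω) ω ∂Q'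
            = (Q' AT).toReal * (SA * eU) + (Q' AF).toReal * (SA * eD) := by
          have hAsplit : A = (AT ∪ AF) ∪ (A \ (AT ∪ AF)) := (Set.union_diff_cancel hsubU).symm
          calc ∫ ω in A, binSd n σ s₀ (T.τ (k+1) ω) ω ∂Q'
              = ∫ ω in (AT ∪ AF) ∪ (A \ (AT ∪ AF)), binSd n σ s₀ (T.τ (k+1) ω) ω ∂Q' := by
                rw [← hAsplit]
            _ = (∫ ω in AT ∪ AF, binSd n σ s₀ (T.τ (k+1) ω) ω ∂Q')
                + ∫ ω in A \ (AT ∪ AF), binSd n σ s₀ (T.τ (k+1) ω) ω ∂Q' :=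
                setIntegral_union (Set.disjoint_sdiff_right) (hmA.diff (hmT.union hmF))
                  hYint.integrableOn hYint.integrableOn
            _ = ∫ ω in AT ∪ AF, binSd n σ s₀ (T.τ (k+1) ω) ω ∂Q' := by
                rw [setIntegral_measure_zero _ hNnull, add_zero]
            _ = (∫ ω in AT, binSd n σ s₀ (T.τ (k+1) ω) ω ∂Q')
                + ∫ ω in AF, binSd n σ s₀ (T.τ (k+1) ω) ω ∂Q' :=
                setIntegral_union hTF hmF hYint.integrableOn hYint.integrableOn
            _ = (Q' AT).toReal * (SA * eU) + (Q' AF).toReal * (SA * eD) := by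
                rw [hIT, hIF]
        -- real linear algebra
        set t : ℝ := (Q' A).toReal with hht
        set x : ℝ := (Q' AT).toReal with hhx
        set y : ℝ := (Q' AF).toReal with hhy
        have htv : t = ∏ j ∈ Finset.range k, rho n T σ j p := by
          rw [hht, ihp, ENNReal.toReal_ofReal hCk]
        have hxy : t = x + y := by
          rw [hht, hhx, hhy, hQA, ENNReal.toReal_add (measure_ne_top Q' AT)
            (measure_ne_top Q' AF)]
        have hSAt : SA * t = x * (SA * eU) + y * (SA * eD) := by
          rw [mul_comm SA t, ← hIA, hIeq, hIY]
        have hSApos : 0 < SA := Shat_pos n hs₀ _ _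
        have hlin : t = x * eU + y * eD := by
          have h1 : SA * t = SA * (x * eU + y * eD) := by
            rw [hSAt]
            ring
          exact mul_left_cancel₀ (ne_of_gt hSApos) h1
        have hc : 0 < cc n σ := cc_pos n hn hσ
        have heU1 : 1 < eU := by
          rw [heU, ← Real.exp_zero]
          have hU1 : (1:ℝ) ≤ ((bib n T true k p - tauh n T k p : ℕ) : ℝ) := by
            exact_mod_cast Nat.one_le_iff_ne_zero.2 (by omega)
          exact Real.exp_lt_exp.2 (by nlinarith)
        have heD1 : eD < 1 := by
          rw [heD, ← Real.exp_zero]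
          have hD1 : (1:ℝ) ≤ ((bib n T false k p - tauh n T k p : ℕ) : ℝ) := by
            exact_mod_cast Nat.one_le_iff_ne_zero.2 (by omega)
          exact Real.exp_lt_exp.2 (by nlinarith)
        have heD0 : 0 < eD := Real.exp_pos _
        have hden : 0 < eU - eD := by linarith
        have hqdef : qq n T σ k p = (1 - eD) / (eU - eD) := rfl
        have hx : x * (eU - eD) = (1 - eD) * t := by linear_combination (-1 : ℝ) * hlin + eD * hxy
        have hxq : x = qq n T σ k p * t := by
          rw [hqdef, div_mul_eq_mul_div, eq_div_iff (ne_of_gt hden)]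
          linear_combination hx
        have hyq : y = (1 - qq n T σ k p) * t := by
          linear_combination -hxy - hxq
        -- subcases
        by_cases hT : agr n (bib n T true k p) p (padAbove n (tauh n T k p) true p)
        · have hb : tauh n T (k+1) p = bib n T true k p := (mem_branch n T hv hT).2.1
          have hset : {p' : E n | agr n (tauh n T (k+1) p) p' p}
              = {p' | agr n (bib n T true k p) p' (padAbove n (tauh n T k p) true p)} := by
            ext p'
            simp only [Set.mem_setOf_eq, hb]
            exact ⟨fun h => agr_trans n h hT, fun h => agr_trans n h (agr_symm n hT)⟩
          rw [hset]
          have hQT : Q' AT = ENNReal.ofReal x := (ENNReal.ofReal_toReal (measure_ne_top Q' AT)).symm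
          rw [show restr n ⁻¹'
              {p' | agr n (bib n T true k p) p' (padAbove n (tauh n T k p) true p)} = AT from rfl,
            hQT, Finset.prod_range_succ, rho_branch_true n T hv hT]
          congr 1
          rw [hxq, htv]
          ring
        by_cases hF : agr n (bib n T false k p) p (padAbove n (tauh n T k p) false p)
        · have hb : tauh n T (k+1) p = bib n T false k p := (mem_branch n T hvf hF).2.1
          have hset : {p' : E n | agr n (tauh n T (k+1) p) p' p}
              = {p' | agr n (bib n T false k p) p' (padAbove n (tauh n T k p) false p)} := by
            ext p'
            simp only [Set.mem_setOf_eq, hb]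
            exact ⟨fun h => agr_trans n h hF, fun h => agr_trans n h (agr_symm n hF)⟩
          rw [hset]
          have hQF : Q' AF = ENNReal.ofReal y := (ENNReal.ofReal_toReal (measure_ne_top Q' AF)).symm
          rw [show restr n ⁻¹'
              {p' | agr n (bib n T false k p) p' (padAbove n (tauh n T k p) false p)} = AF from
              rfl,
            hQF, Finset.prod_range_succ, rho_branch_false n T hn hv hF]
          congr 1
          rw [hyq, htv]
          ring
        · -- degenerate branch: zero mass
          have hrho : rho n T σ k p = 0 := rho_eq_zero n T hn hv (self_mem_atomF n T k p) hT hF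
          rw [Finset.prod_range_succ, hrho, mul_zero, ENNReal.ofReal_zero]
          have hb : tauh n T k p < tauh n T (k+1) p := lt_tauh_succ n T hv (self_mem_atomF n T k p)
          refine measure_mono_null ?_ (ae_good_of_ae n T hQ'.2.2.1)
          intro ω hω
          have hω' : agr n (tauh n T (k+1) p) (restr n ω) p := hω
          have hmem : restr n ω ∈ atomF n T k p :=
            (mem_atomF n T).2 (agr_mono n (le_of_lt hb) hω')
          have hτk : T.τ k ω = tauh n T k p :=
            tau_on_cyl n T (le_of_lt hb) hω'
          have hτk1 : T.τ (k+1) ω = tauh n T (k+1) p := by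
            rw [tau_eq_tauh n T (k+1) ω]
            exact tauh_agree n T (agr_symm n hω') le_rfl
          intro hgood
          have hmono := hgood k (by omega)
          rw [hτk, hτk1] at hmono
          have hruns := (monotoneRun_iff_runIs n (tauh_le n T (k+1) p) ω).1 hmono
          have hrw : tauh n T (k+1) (restr n ω) = tauh n T (k+1) p := by
            rw [tau_eq_tauh n T (k+1) ω] at hτk1
            exact hτk1
          rcases hruns with hrT | hrF
          · have hrT' : runIs n (tauh n T k p) (tauh n T (k+1) (restr n ω)) true (restr n ω) := by
              rw [hrw]
              exact hrT
            have hbe := branch_eq n T hmem hrT'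
            refine hT ?_
            have hbu' : tauh n T (k+1) p = bib n T true k p := by
              rw [← hrw, hbe.1]
            have h1 : agr n (bib n T true k p) p (restr n ω) := by
              rw [← hbu']
              exact agr_symm n hω'
            exact agr_trans n h1 hbe.2
          · have hrF' : runIs n (tauh n T k p) (tauh n T (k+1) (restr n ω)) false (restr n ω) := by
              rw [hrw]
              exact hrF
            have hbe := branch_eq n T hmem hrF'
            refine hF ?_
            have hbu' : tauh n T (k+1) p = bib n T false k p := by
              rw [← hrw, hbe.1]
            have h1 : agr n (bib n T false k p) p (restr n ω) := by
              rw [← hbu']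
              exact agr_symm n hω'
            exact agr_trans n h1 hbe.2

end Unique

end QP

/-- For every stopping system `𝕋 ∈ 𝒯⁽ⁿ⁾` there exists exactly one probability
measure on `σ(ζ_1, …, ζ_n)` that is absolutely continuous with respect to `P`, makes
`(S⁽ⁿ⁾_{τ_k})_{k}` a martingale with respect to `(𝓕⁽ⁿ⁾_{τ_k})_k`, and gives full measure to the
scenarios in which, for every `k` with `τ_k < 1`, the increments between `τ_k` and `τ_{k+1}`
are all `+1` or all `−1` (also when `τ_{k+1} = 1`). -/
theorem existsUnique_QMeasure (n : ℕ) (σ s₀ : ℝ) (hn : 1 ≤ n) (hσ : 0 < σ) (hs₀ : 0 < s₀)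
    (P : Measure BinOmega) (hP : IsFairCoin P) (T : BinStopSystem n) :
    ∃ Q : Measure BinOmega, IsQMeasure n σ s₀ P Q T ∧
      ∀ Q' : Measure BinOmega, IsQMeasure n σ s₀ P Q' T →
        ∀ A : Set BinOmega, MeasurableSet[coordMS n] A → Q A = Q' A := by
  classical
  haveI hPinst : IsProbabilityMeasure P := hP.1
  refine ⟨QP.Qmeas n T σ P, QP.Qmeas_isQMeasure n T hn hσ P hP, ?_⟩
  intro Q' hQ' A hA
  have hcylQ := QP.cyl_val n T hn hσ hs₀ P (QP.Qmeas n T σ P)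
    (QP.Qmeas_isQMeasure n T hn hσ P hP) n
  have hcylQ' := QP.cyl_val n T hn hσ hs₀ P Q' hQ' n
  have hsingle : ∀ p : QP.E n, {p' : QP.E n | QP.agr n (QP.tauh n T n p) p' p} = {p} := by
    intro p
    ext p'
    simp only [Set.mem_setOf_eq, Set.mem_singleton_iff, QP.tauh_top n T le_rfl]
    constructor
    · intro h
      funext i
      exact h i i.isLt
    · intro h
      rw [h]
      exact QP.agr_refl n p
  have hcyl : ∀ p : QP.E n,
      QP.Qmeas n T σ P (QP.restr n ⁻¹' {p}) = Q' (QP.restr n ⁻¹' {p}) := by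
    intro p
    have h1 := hcylQ p
    have h2 := hcylQ' p
    rw [hsingle p] at h1 h2
    rw [h1, h2]
  obtain ⟨S, rfl⟩ := QP.coordMS_iff.1 hA
  have hdecomp : QP.restr n ⁻¹' S = ⋃ p ∈ S.toFinset, QP.restr n ⁻¹' {p} := by
    ext ω
    simp only [Set.mem_preimage, Set.mem_iUnion, Set.mem_toFinset, Set.mem_singleton_iff]
    constructor
    · intro h
      exact ⟨QP.restr n ω, h, rfl⟩
    · rintro ⟨p, hp, hr⟩
      rw [hr]
      exact hp
  have hdisj : (↑S.toFinset : Set (QP.E n)).PairwiseDisjoint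
      (fun p => QP.restr n ⁻¹' {p}) := by
    intro p _ q _ hpq
    simp only [Function.onFun]
    rw [Set.disjoint_left]
    intro ω h1 h2
    exact hpq ((Set.mem_singleton_iff.1 h1).symm.trans (Set.mem_singleton_iff.1 h2))
  have hmeas : ∀ p ∈ S.toFinset, MeasurableSet (QP.restr n ⁻¹' {p}) :=
    fun p _ => QP.measurable_restr n (measurableSet_singleton p)
  rw [hdecomp, measure_biUnion_finset hdisj hmeas, measure_biUnion_finset hdisj hmeas]
  exact Finset.sum_congr rfl (fun p _ => hcyl p)
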